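/- arXiv:2005.05813 — 8 statements merged into one kernel-verified Lean document; each statement's English description precedes it below -/
import Mathlib

section
/- For every c ∈ (0,1) there exists R > 1 such that for all z ∈ D_R(0) the number c · z e^{z+1} does not lie in the real interval (−∞, −1]. -/
open Complex

lemma aux_slit (c R x t : ℝ) (hc0 : 0 < c) (hR1 : 1 < R) (hR2 : R^2 < 2)
    (hkey : c * R * Real.exp (2 - 2/R^2) < 1)
    (ht0 : 0 < t) (hxt : x^2 + t^2 < R^2)
    (hline : x * Real.sin t + t * Real.cos t = 0)
    (hre : c * (Real.exp (x+1) * (x * Real.cos t - t * Real.sin t)) ≤ -1) : False := by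
  have hR0 : (0:ℝ) < R := by linarith
  have hRlt2 : R < 2 := by nlinarith
  have htR : t < R := by nlinarith
  have hπ : t < Real.pi := by have := Real.pi_gt_three; linarith
  have hσ : 0 < Real.sin t := Real.sin_pos_of_pos_of_lt_pi ht0 hπ
  have hσt : Real.sin t < t := Real.sin_lt ht0
  have hsq : (x^2 + t^2) * (Real.sin t)^2 = t^2 := by
    linear_combination (x*Real.sin t - t*Real.cos t) * hline + t^2 * (Real.sin_sq_add_cos_sq t)
  set s := t / Real.sin t with hs
  have hs0 : 0 < s := div_pos ht0 hσ
  have hs1 : 1 < s := (one_lt_div hσ).mpr hσt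
  have hssq : s^2 = x^2 + t^2 := by
    rw [hs, div_pow]
    rw [div_eq_iff (by positivity)]
    linarith [hsq]
  have hsR : s < R := by nlinarith
  have hhalf : Real.cos t = 2 * Real.cos (t/2)^2 - 1 := by
    have h := Real.cos_two_mul (t/2)
    rw [show 2*(t/2) = t from by ring] at h
    linarith
  have hc2pos : 0 < Real.cos (t/2) := by
    apply Real.cos_pos_of_mem_Ioo
    constructor
    · have := Real.pi_gt_three; linarith
    · have := Real.pi_gt_three; linarith
  have hsin2 : Real.sin t = 2 * Real.sin (t/2) * Real.cos (t/2) := by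
    have h := Real.sin_two_mul (t/2)
    rwa [show 2*(t/2) = t from by ring] at h
  have hsinhalf : Real.sin (t/2) ≤ t/2 := le_of_lt (Real.sin_lt (by linarith))
  have hσle : Real.sin t ≤ t * Real.cos (t/2) := by nlinarith
  have hcoshalf_lb : 1/s ≤ Real.cos (t/2) := by
    have h1 : Real.sin t / t ≤ Real.cos (t/2) := by
      rw [div_le_iff₀ ht0]; linarith [hσle]
    have h2 : 1/s = Real.sin t / t := by
      rw [hs, one_div_div]
    linarith
  have hRinv : 1/R ≤ 1/s := one_div_le_one_div_of_le hs0 hsR.le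
  have hcossq : (1/R)^2 ≤ Real.cos (t/2)^2 := by
    have h : 1/R ≤ Real.cos (t/2) := le_trans hRinv hcoshalf_lb
    have h0 : (0:ℝ) ≤ 1/R := by positivity
    exact pow_le_pow_left₀ h0 h 2
  have hκ : 2/R^2 - 1 ≤ Real.cos t := by
    have h : 2/R^2 = 2 * (1/R)^2 := by ring
    rw [h]; linarith
  have hκ0 : 0 ≤ Real.cos t := by
    have h2R : 1 ≤ 2/R^2 := by
      rw [le_div_iff₀ (pow_pos hR0 2), one_mul]; linarith
    linarith
  have hxσ : x * Real.sin t = -(t * Real.cos t) := by linarith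
  have hxb : x ≤ 1 - 2/R^2 := by
    have h1 : x * Real.sin t ≤ (1 - 2/R^2) * Real.sin t := by nlinarith
    exact le_of_mul_le_mul_right h1 hσ
  have hval0 : (x * Real.cos t - t * Real.sin t) * Real.sin t = -t := by
    linear_combination Real.cos t * hxσ - t * (Real.sin_sq_add_cos_sq t)
  have hval : x * Real.cos t - t * Real.sin t = -s := by
    rw [hs, ← neg_div, eq_div_iff hσ.ne']
    exact hval0
  rw [hval] at hre
  have hre2 : 1 ≤ c * (Real.exp (x+1) * s) := by
    have hh : c * (Real.exp (x+1) * -s) = -(c * (Real.exp (x+1) * s)) := by ring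
    rw [hh] at hre
    linarith
  have hEb : Real.exp (x+1) ≤ Real.exp (2 - 2/R^2) := Real.exp_le_exp.mpr (by linarith)
  have hfin : c * (Real.exp (x+1) * s) < 1 := by
    calc c * (Real.exp (x+1) * s) ≤ c * (Real.exp (2-2/R^2) * R) := by
          apply mul_le_mul_of_nonneg_left _ hc0.le
          exact mul_le_mul hEb hsR.le hs0.le (Real.exp_pos _).le
      _ = c * R * Real.exp (2-2/R^2) := by ring
      _ < 1 := hkey
  linarith

/-- Lemma 3(i): for every `c ∈ (0,1)` there exists `R > 1` such that `c · z e^{z+1}`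
avoids the real interval `(-∞, -1]` for all `z` in the disk `D_R(0)`. -/
theorem scaled_w_avoids_slit (c : ℝ) (hc0 : 0 < c) (hc1 : c < 1) :
    ∃ R : ℝ, 1 < R ∧ ∀ z ∈ Metric.ball (0 : ℂ) R,
      ¬(((c : ℂ) * (z * Complex.exp (z + 1))).im = 0 ∧
        ((c : ℂ) * (z * Complex.exp (z + 1))).re ≤ -1) := by
  have hlog : Real.log c < 0 := Real.log_neg hc0 hc1
  set δ : ℝ := min (1/5) (-Real.log c / 8) with hδdef
  have hδ0 : 0 < δ := lt_min (by norm_num) (by linarith)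
  have hδ5 : δ ≤ 1/5 := min_le_left _ _
  have hδ8 : δ ≤ -Real.log c / 8 := min_le_right _ _
  set R : ℝ := 1 + δ with hRdef
  have hR1 : 1 < R := by rw [hRdef]; linarith
  have hR0 : 0 < R := by linarith
  have hR2 : R^2 < 2 := by rw [hRdef]; nlinarith
  have hkey : c * R * Real.exp (2 - 2/R^2) < 1 := by
    have h1 : R ≤ Real.exp δ := by
      have := Real.add_one_le_exp δ; rw [hRdef]; linarith
    have h2 : 2 - 2/R^2 ≤ 6*δ := by
      have hR2pos : (0:ℝ) < R^2 := by positivity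
      have h3 : (2 - 6*δ) * R^2 ≤ 2 := by
        rw [hRdef]
        nlinarith [hδ0.le, mul_nonneg hδ0.le hδ0.le,
          mul_nonneg (mul_nonneg hδ0.le hδ0.le) hδ0.le]
      have h4 : 2 - 6*δ ≤ 2/R^2 := by
        rw [le_div_iff₀ hR2pos]; linarith
      linarith
    calc c * R * Real.exp (2 - 2/R^2)
        ≤ c * Real.exp δ * Real.exp (6*δ) := by
          apply mul_le_mul
          · exact mul_le_mul_of_nonneg_left h1 hc0.le
          · exact Real.exp_le_exp.mpr h2
          · exact (Real.exp_pos _).le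
          · positivity
      _ = c * Real.exp (7*δ) := by rw [mul_assoc, ← Real.exp_add]; ring_nf
      _ = Real.exp (Real.log c + 7*δ) := by rw [Real.exp_add, Real.exp_log hc0]
      _ < 1 := by
          rw [← Real.exp_zero]
          exact Real.exp_lt_exp.mpr (by linarith)
  refine ⟨R, hR1, ?_⟩
  intro z hz
  rintro ⟨him, hre⟩
  set x := z.re with hx
  set y := z.im with hy
  have hball : x^2 + y^2 < R^2 := by
    have h := mem_ball_zero_iff.mp hz
    have habs : ‖z‖ < R := h
    nlinarith [Complex.sq_norm z, Complex.normSq_apply z, norm_nonneg z]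
  have hE : 0 < Real.exp (x+1) := Real.exp_pos _
  have heq_im : ((c : ℂ) * (z * Complex.exp (z + 1))).im
      = c * (Real.exp (x+1) * (x * Real.sin y + y * Real.cos y)) := by
    simp only [Complex.mul_im, Complex.mul_re, Complex.exp_re, Complex.exp_im,
      Complex.add_re, Complex.add_im, Complex.ofReal_re, Complex.ofReal_im,
      Complex.one_re, Complex.one_im]
    rw [hx, hy]; ring
  have heq_re : ((c : ℂ) * (z * Complex.exp (z + 1))).re
      = c * (Real.exp (x+1) * (x * Real.cos y - y * Real.sin y)) := by
    simp only [Complex.mul_im, Complex.mul_re, Complex.exp_re, Complex.exp_im,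
      Complex.add_re, Complex.add_im, Complex.ofReal_re, Complex.ofReal_im,
      Complex.one_re, Complex.one_im]
    rw [hx, hy]; ring
  rw [heq_im] at him
  rw [heq_re] at hre
  have hline : x * Real.sin y + y * Real.cos y = 0 := by
    rcases mul_eq_zero.mp him with h | h
    · exact absurd h hc0.ne'
    · rcases mul_eq_zero.mp h with h' | h'
      · exact absurd h' hE.ne'
      · exact h'
  by_cases hy0 : y = 0
  · rw [hy0] at hre
    simp at hre
    -- hre : c * (Real.exp (x+1) * x) ≤ -1
    have h1 : -x ≤ Real.exp (-(x+1)) := by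
      have := Real.add_one_le_exp (-(x+1)); linarith
    have h2 : -x * Real.exp (x+1) ≤ 1 := by
      have h3 : Real.exp (-(x+1)) * Real.exp (x+1) = 1 := by
        rw [← Real.exp_add, show -(x+1)+(x+1) = (0:ℝ) from by ring, Real.exp_zero]
      nlinarith [mul_le_mul_of_nonneg_right h1 hE.le]
    have h4 := mul_le_mul_of_nonneg_left h2 hc0.le
    nlinarith [h4, hre]
  · rcases lt_or_gt_of_ne hy0 with hneg | hpos
    · -- y < 0 : apply aux with t = -y
      have hball' : x^2 + (-y)^2 < R^2 := by
        rw [show (-y)^2 = y^2 from by ring]; exact hball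
      apply aux_slit c R x (-y) hc0 hR1 hR2 hkey (by linarith) hball'
      · rw [Real.sin_neg, Real.cos_neg]; linarith
      · rw [Real.sin_neg, Real.cos_neg]
        calc c * (Real.exp (x+1) * (x * Real.cos y - -y * -Real.sin y))
            = c * (Real.exp (x+1) * (x * Real.cos y - y * Real.sin y)) := by ring
          _ ≤ -1 := hre
    · exact aux_slit c R x y hc0 hR1 hR2 hkey hpos hball hline hre
end

section
/- For every ε ∈ (0, 1/100] and every z ∈ ℂ with |z| < 1+ε and |1+z| > ε^{1/4}, the number z e^{z+1} does not lie in the real interval (−∞, −1]. -/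
open Complex

/-- If `x ≠ -1` then `x e^{x+1} > -1` for real `x`. -/
lemma real_slit_case (x : ℝ) (hx : x ≠ -1) : -1 < x * Real.exp (x + 1) := by
  rcases le_or_gt 0 x with h | h
  · nlinarith [Real.exp_pos (x + 1), mul_nonneg h (Real.exp_pos (x+1)).le]
  · have hu : 0 < -x := by linarith
    have hne : -x ≠ 1 := by intro h'; apply hx; linarith
    have hlog := Real.log_lt_sub_one_of_pos hu hne
    have h2 : Real.exp (Real.log (-x) + (x + 1)) < Real.exp 0 := by
      apply Real.exp_lt_exp.2; linarith
    rw [Real.exp_add, Real.exp_log hu, Real.exp_zero] at h2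
    nlinarith

set_option maxHeartbeats 2000000 in
private lemma tsq_bound (ε t s : ℝ) (hε0 : 0 < ε) (hε1 : ε ≤ 1/100) (ht : 0 < t)
    (ht1 : t ≤ 1) (hs2 : t ^ 2 < (1 + ε) ^ 2 * s ^ 2)
    (hsl : t - t ^ 3 / 6 - t ^ 4 * (5/96) ≤ s)
    (hsu : s ≤ t - t ^ 3 / 6 + t ^ 4 * (5/96)) :
    t ^ 2 ≤ 6.95 * ε := by
  have hA0 : (0:ℝ) < (1 + ε) ^ 2 := by positivity
  have hA1 : (0:ℝ) ≤ (1 + ε) ^ 2 - 1 := by nlinarith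
  have ht3 : (0:ℝ) < t ^ 3 := by positivity
  have ht4 : t ^ 4 ≤ t ^ 3 := by nlinarith
  have hsup : s ≤ t - (11/96) * t ^ 3 := by linarith
  have hslow : (75/96) * t ≤ s := by nlinarith
  have hb2 : s ^ 2 ≤ t ^ 2 - 0.216 * t ^ 4 := by
    have h6 : t ^ 6 ≤ t ^ 4 := by nlinarith [pow_pos ht 4, sq_nonneg t]
    have hU : s ^ 2 ≤ (t - (11/96) * t ^ 3) ^ 2 := by
      nlinarith [mul_nonneg (sub_nonneg.2 hsup) (by nlinarith : (0:ℝ) ≤ (t - (11/96) * t ^ 3) + s)]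
    nlinarith [hU, h6]
  have hstep : t ^ 2 < (1 + ε) ^ 2 * (t ^ 2 - 0.216 * t ^ 4) :=
    lt_of_lt_of_le hs2 (mul_le_mul_of_nonneg_left hb2 hA0.le)
  have hkey : 0.216 * t ^ 4 < (2 * ε + ε ^ 2) * t ^ 2 := by
    nlinarith [mul_nonneg hA1 (pow_pos ht 4).le]
  have h13 : t ^ 2 ≤ 13 * ε := by
    by_contra hcc; push_neg at hcc
    nlinarith [mul_lt_mul_of_pos_right hcc (pow_pos ht 2),
      mul_pos hε0 (pow_pos ht 2), mul_nonneg (mul_pos hε0 (pow_pos ht 2)).le hε0.le]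
  have ht013 : t ^ 2 ≤ 0.13 := by linarith
  have ht036 : t ≤ 0.361 := by nlinarith [sq_nonneg (t - 0.361)]
  have ht4b : t ^ 4 ≤ 0.361 * t ^ 3 := by
    have := mul_le_mul_of_nonneg_right ht036 ht3.le
    nlinarith [this]
  have hsup2 : s ≤ t - 0.147 * t ^ 3 := by linarith
  have hb2' : s ^ 2 ≤ t ^ 2 - 0.291 * t ^ 4 := by
    have h6 : t ^ 6 ≤ 0.13 * t ^ 4 := by
      have := mul_le_mul_of_nonneg_right ht013 (pow_pos ht 4).le
      nlinarith [this]
    have hU : s ^ 2 ≤ (t - 0.147 * t ^ 3) ^ 2 := by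
      nlinarith [mul_nonneg (sub_nonneg.2 hsup2) (by nlinarith : (0:ℝ) ≤ (t - 0.147 * t ^ 3) + s)]
    nlinarith [hU, h6]
  have hstep2 : t ^ 2 < (1 + ε) ^ 2 * (t ^ 2 - 0.291 * t ^ 4) :=
    lt_of_lt_of_le hs2 (mul_le_mul_of_nonneg_left hb2' hA0.le)
  have hkey2 : 0.291 * t ^ 4 < (2 * ε + ε ^ 2) * t ^ 2 := by
    nlinarith [mul_nonneg hA1 (pow_pos ht 4).le]
  by_contra hcc; push_neg at hcc
  nlinarith [mul_lt_mul_of_pos_right hcc (pow_pos ht 2),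
    mul_pos hε0 (pow_pos ht 2), mul_nonneg (mul_pos hε0 (pow_pos ht 2)).le hε0.le]

set_option maxHeartbeats 2000000 in
private lemma onex_bound (t x s c : ℝ) (ht : 0 < t) (ht2 : t ^ 2 ≤ 0.0695)
    (ht26 : t ≤ 0.264) (hxs : x * s + t * c = 0)
    (hsl : t - t ^ 3 / 6 - t ^ 4 * (5/96) ≤ s)
    (hsu : s ≤ t - t ^ 3 / 6 + t ^ 4 * (5/96))
    (hcl : 1 - t ^ 2 / 2 - t ^ 4 * (5/96) ≤ c)
    (hcu : c ≤ 1 - t ^ 2 / 2 + t ^ 4 * (5/96)) :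
    0 ≤ 1 + x ∧ (1 + x) ^ 2 ≤ 0.0089 * t ^ 2 := by
  have ht3 : (0:ℝ) < t ^ 3 := by positivity
  have ht4a : t ^ 4 ≤ 0.264 * t ^ 3 := by nlinarith
  have ht5a : t ^ 5 ≤ 0.0695 * t ^ 3 := by nlinarith [pow_pos ht 3]
  have hnum_up : s - t * c ≤ 0.351 * t ^ 3 := by nlinarith
  have hnum_low : 0 ≤ s - t * c := by nlinarith
  have hs_low : 0.987 * t ≤ s := by nlinarith
  have hspos : 0 < s := by nlinarith
  have hxeq : (1 + x) * s = s - t * c := by linear_combination hxs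
  have h1x_low : 0 ≤ 1 + x := by
    by_contra hcc; push_neg at hcc
    nlinarith [mul_pos hspos (neg_pos.2 hcc)]
  have h1x_up : 1 + x ≤ 0.357 * t ^ 2 := by
    by_contra hcc; push_neg at hcc
    nlinarith [mul_pos ht hspos]
  constructor
  · exact h1x_low
  · nlinarith [sq_nonneg t]

set_option maxHeartbeats 2000000 in
lemma key_real (ε t x : ℝ) (hε0 : 0 < ε) (hε1 : ε ≤ 1 / 100) (ht : 0 < t)
    (hx : x * Real.sin t + t * Real.cos t = 0)
    (h1 : x ^ 2 + t ^ 2 < (1 + ε) ^ 2) :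
    (1 + x) ^ 2 + t ^ 2 ≤ Real.sqrt ε := by
  have hpyth := Real.sin_sq_add_cos_sq t
  set s := Real.sin t with hs
  set c := Real.cos t with hc
  have hts : t ^ 2 = (x ^ 2 + t ^ 2) * s ^ 2 := by
    linear_combination (t * c - x * s) * hx - t ^ 2 * hpyth
  have hepsq : (1 + ε) ^ 2 ≤ 1.0201 := by nlinarith
  have hs2 : t ^ 2 < (1 + ε) ^ 2 * s ^ 2 := by
    have hspos : 0 < s ^ 2 := by
      rcases eq_or_ne s 0 with h | h
      · exfalso; rw [h] at hts; nlinarith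
      · positivity
    nlinarith
  have ht1 : t ≤ 1 := by
    by_contra hcon
    push_neg at hcon
    rcases le_or_gt 1.02 t with h2 | h2
    · nlinarith [Real.neg_one_le_sin t, Real.sin_le_one t]
    · have hsin1 : Real.sin 1 ≤ 0.886 := by
        have hb := Real.sin_bound (x := 1) (by norm_num)
        rw [abs_le] at hb
        norm_num at hb
        linarith [hb.2]
      have hsplit : s = Real.sin 1 * Real.cos (t - 1) + Real.cos 1 * Real.sin (t - 1) := by
        rw [hs, show t = 1 + (t - 1) by ring, Real.sin_add]
        ring_nf
      have hpi : (3:ℝ) < Real.pi := Real.pi_gt_three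
      have h3 : s ≤ 0.886 + (t - 1) := by
        have hsin1pos : 0 ≤ Real.sin 1 :=
          Real.sin_nonneg_of_nonneg_of_le_pi (by norm_num) (by linarith)
        have hcos1 : Real.cos 1 ≤ 1 := Real.cos_le_one 1
        have hcos1pos : 0 ≤ Real.cos 1 := Real.cos_nonneg_of_mem_Icc
          ⟨by linarith [Real.pi_div_two_pos], by
            have : (1:ℝ) ≤ Real.pi / 2 := by linarith
            linarith⟩
        have hst1 : Real.sin (t - 1) < t - 1 := Real.sin_lt (by linarith)
        have hst1pos : 0 ≤ Real.sin (t - 1) :=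
          Real.sin_nonneg_of_nonneg_of_le_pi (by linarith) (by linarith)
        have hcost1 : Real.cos (t - 1) ≤ 1 := Real.cos_le_one _
        nlinarith
      have hspos2 : 0 ≤ s :=
        Real.sin_nonneg_of_nonneg_of_le_pi (by linarith) (by linarith)
      nlinarith
  have habs : |t| ≤ 1 := by rw [abs_of_pos ht]; exact ht1
  have hsinb := Real.sin_bound habs
  have hcosb := Real.cos_bound habs
  rw [abs_le, abs_of_pos ht] at hsinb hcosb
  have hsl : t - t ^ 3 / 6 - t ^ 4 * (5/96) ≤ s := by
    have := hsinb.1; nlinarith [mul_le_mul_of_nonneg_left ht1 (pow_pos ht 4).le]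
  have hsu : s ≤ t - t ^ 3 / 6 + t ^ 4 * (5/96) := by
    have := hsinb.2; nlinarith [mul_le_mul_of_nonneg_left ht1 (pow_pos ht 4).le]
  have hcl : 1 - t ^ 2 / 2 - t ^ 4 * (5/96) ≤ c := by
    have := hcosb.1; linarith
  have hcu : c ≤ 1 - t ^ 2 / 2 + t ^ 4 * (5/96) := by
    have := hcosb.2; linarith
  have htsq := tsq_bound ε t s hε0 hε1 ht ht1 hs2 hsl hsu
  have ht2 : t ^ 2 ≤ 0.0695 := by nlinarith
  have ht26 : t ≤ 0.264 := by nlinarith [sq_nonneg (t - 0.264)]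
  obtain ⟨h1x, hsqx⟩ := onex_bound t x s c ht ht2 ht26 hx hsl hsu hcl hcu
  have hr0 : 0 ≤ Real.sqrt ε := Real.sqrt_nonneg ε
  have hr2 : Real.sqrt ε ^ 2 = ε := Real.sq_sqrt hε0.le
  have hr1 : Real.sqrt ε ≤ 0.1 := by nlinarith
  nlinarith [mul_le_mul_of_nonneg_left hr1 hr0, htsq, hsqx]

set_option maxHeartbeats 2000000 in
/-- Lemma 3(ii): for `ε ∈ (0, 1/100]`, the map `z ↦ z e^{z+1}` maps the region
`{|z| < 1+ε, |1+z| > ε^{1/4}}` into `ℂ ∖ (-∞, -1]`. -/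
theorem w_avoids_slit_on_Dcal (ε : ℝ) (hε0 : 0 < ε) (hε1 : ε ≤ 1 / 100) :
    ∀ z : ℂ, ‖z‖ < 1 + ε → ε ^ ((1 : ℝ) / 4) < ‖1 + z‖ →
      ¬((z * Complex.exp (z + 1)).im = 0 ∧ (z * Complex.exp (z + 1)).re ≤ -1) := by
  intro z hz1 hz2 ⟨him, hre⟩
  set x := z.re with hxdef
  set y := z.im with hydef
  have hE : (0:ℝ) < Real.exp (x + 1) := Real.exp_pos _
  have himc : (z * Complex.exp (z + 1)).im
      = (x * Real.sin y + y * Real.cos y) * Real.exp (x + 1) := by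
    rw [Complex.mul_im, Complex.exp_im, Complex.exp_re]
    simp [Complex.add_re, Complex.add_im]
    ring
  have hrec : (z * Complex.exp (z + 1)).re
      = (x * Real.cos y - y * Real.sin y) * Real.exp (x + 1) := by
    rw [Complex.mul_re, Complex.exp_im, Complex.exp_re]
    simp [Complex.add_re, Complex.add_im]
    ring
  rw [himc] at him
  rw [hrec] at hre
  have him0 : x * Real.sin y + y * Real.cos y = 0 := by
    rcases mul_eq_zero.1 him with h | h
    · exact h
    · exact absurd h hE.ne'
  rcases eq_or_ne y 0 with hy | hy
  · -- real case
    have hx1 : x ≠ -1 := by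
      intro hxm
      have hz0 : (1 : ℂ) + z = 0 := by
        apply Complex.ext <;> simp [← hxdef, ← hydef, hxm, hy]
      rw [hz0] at hz2
      simp at hz2
      exact absurd hz2 (not_lt.2 (Real.rpow_pos_of_pos hε0 _).le)
    have hgt := real_slit_case x hx1
    rw [hy] at hre
    simp at hre
    nlinarith
  · -- nonreal case
    have h1 : x ^ 2 + y ^ 2 < (1 + ε) ^ 2 := by
      have hsq : ‖z‖ ^ 2 < (1 + ε) ^ 2 :=
        pow_lt_pow_left₀ hz1 (norm_nonneg z) (by norm_num)
      rw [Complex.sq_norm, Complex.normSq_apply] at hsq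
      nlinarith
    have h2 : Real.sqrt ε < (1 + x) ^ 2 + y ^ 2 := by
      have hq : (ε ^ ((1:ℝ)/4)) ^ 2 < ‖1 + z‖ ^ 2 :=
        pow_lt_pow_left₀ hz2 (Real.rpow_nonneg hε0.le _) (by norm_num)
      have he : (ε ^ ((1:ℝ)/4)) ^ 2 = Real.sqrt ε := by
        rw [Real.sqrt_eq_rpow, ← Real.rpow_natCast (ε ^ ((1:ℝ)/4)) 2,
          ← Real.rpow_mul hε0.le]
        norm_num
      rw [he, Complex.sq_norm, Complex.normSq_apply] at hq
      simp [← hxdef, ← hydef] at hq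
      nlinarith [hq]
    rcases hy.lt_or_gt with hneg | hpos
    · have hk := key_real ε (-y) x hε0 hε1 (by linarith)
        (by rw [Real.sin_neg, Real.cos_neg]; linarith) (by nlinarith)
      nlinarith
    · have hk := key_real ε y x hε0 hε1 hpos him0 h1
      nlinarith
end

section
/- Let ε ∈ (0, 1/100] and let y ∈ ℝ with sin(y) ≠ 0. If the complex number z = −y cot(y) + i y satisfies |z| < 1 + ε, then |z + 1| < ε^{1/4}. -/
open Complex

lemma sin_upper_aux (x : ℝ) (h0 : 0 < x) (h1 : x ≤ 101/100) :
    Real.sin x ≤ x - x^3/9 := by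
  have h4 : 0 < x/4 := by linarith
  have h4' : x/4 ≤ 1 := by linarith
  have hs4 : x/4 - (x/4)^3/4 < Real.sin (x/4) := by
    have := Real.sin_gt_sub_cube h4; nlinarith [pow_pos h4 3]
  have hu2 : (x/4)^2 ≤ 1 := by nlinarith
  have hu3 : (x/4)^3 ≤ x/4 := by nlinarith [mul_nonneg h4.le (sub_nonneg.mpr hu2)]
  have hb : (0:ℝ) ≤ x/4 - (x/4)^3/4 := by linarith
  have hc2 : Real.cos (x/2) = 1 - 2 * Real.sin (x/4)^2 := by
    have ha := Real.cos_two_mul (x/4)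
    have hb2 := Real.sin_sq_add_cos_sq (x/4)
    rw [show x/2 = 2*(x/4) by ring, ha]; linarith
  have hc2u : Real.cos (x/2) ≤ 1 - 2 * (x/4 - (x/4)^3/4)^2 := by
    rw [hc2]; nlinarith [hs4, hb]
  have hc2l : (0:ℝ) ≤ Real.cos (x/2) := by
    have := Real.one_sub_sq_div_two_le_cos (x := x/2)
    nlinarith
  have hs2u : Real.sin (x/2) ≤ x/2 := Real.sin_le (by linarith)
  have hsx : Real.sin x = 2 * Real.sin (x/2) * Real.cos (x/2) := by
    rw [show x = 2*(x/2) by ring, Real.sin_two_mul]; ring_nf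
  have h18 : (0:ℝ) ≤ 8192 - 2304*x^2 + 18*x^4 := by nlinarith [sq_nonneg (x^2)]
  have hbb : x^2/9 ≤ 2*(x/4 - (x/4)^3/4)^2 := by
    nlinarith [mul_nonneg (sq_nonneg x) h18]
  calc Real.sin x = 2 * Real.sin (x/2) * Real.cos (x/2) := hsx
    _ ≤ 2 * (x/2) * Real.cos (x/2) := by
        nlinarith [mul_le_mul_of_nonneg_right hs2u hc2l]
    _ ≤ x * (1 - 2 * (x/4 - (x/4)^3/4)^2) := by
        nlinarith [mul_le_mul_of_nonneg_left hc2u h0.le]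
    _ ≤ x - x^3/9 := by nlinarith [mul_le_mul_of_nonneg_left hbb h0.le]

lemma scal_aux (ε t q : ℝ) (hq2 : q^2 = ε) (hqle : q ≤ 1/10) (hqpos : 0 < q)
    (ht : 0 < t) (ht9 : t < 9*ε) : t*(t/4+1) < q*(1-t/4)^2 := by
  have hε1 : ε ≤ 1/100 := by nlinarith
  have a1 : q*t ≤ (1/10)*t := mul_le_mul_of_nonneg_right hqle ht.le
  have a2 : t ≤ 9/100 := by linarith
  have a3 : t*t ≤ (9/100)*t := mul_le_mul_of_nonneg_right a2 ht.le
  have a4 : ε ≤ q/10 := by nlinarith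
  have a5 : t < (9/10)*q := by linarith
  have a6 : 0 ≤ q*(t*t) := by positivity
  nlinarith [a1, a3, a5, a6]

set_option maxHeartbeats 4000000 in
lemma core_aux (ε x : ℝ) (hε0 : 0 < ε) (hε1 : ε ≤ 1/100) (hx : 0 < x)
    (hsx : Real.sin x ≠ 0)
    (h : (x * (Real.cos x / Real.sin x))^2 + x^2 < (1+ε)^2) :
    (1 - x * (Real.cos x / Real.sin x))^2 + x^2 < Real.sqrt ε := by
  have hx1 : x ≤ 101/100 := by
    nlinarith [sq_nonneg (x * (Real.cos x / Real.sin x)), hε0, hε1]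
  have hpi : x < Real.pi := by linarith [Real.pi_gt_three]
  have hs : 0 < Real.sin x := Real.sin_pos_of_pos_of_lt_pi hx hpi
  have hpyth : Real.sin x ^2 + Real.cos x ^2 = 1 := Real.sin_sq_add_cos_sq x
  have hup : Real.sin x ≤ x - x^3/9 := sin_upper_aux x hx hx1
  have hcl : 1 - x^2/2 ≤ Real.cos x := Real.one_sub_sq_div_two_le_cos
  have hcu : Real.cos x ≤ 1 := Real.cos_le_one x
  have hsu : Real.sin x ≤ x := Real.sin_le hx.le
  have hsl' : x ≤ 1 → x - x^3/4 < Real.sin x := fun _ => by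
    have := Real.sin_gt_sub_cube hx; nlinarith [pow_pos hx 3]
  set s := Real.sin x with hsdef
  set c := Real.cos x with hcdef
  clear_value s c
  clear hsdef hcdef hsx hpi
  have hident : (x * (c/s))^2 + x^2 = x^2/s^2 := by
    field_simp
    linear_combination hpyth
  have hxs2 : x^2 < (1+ε)^2 * s^2 := by
    rw [hident] at h
    have := (div_lt_iff₀ (by positivity : (0:ℝ) < s^2)).mp h
    linarith
  have hxs : x < (1+ε) * s := by
    refine lt_of_pow_lt_pow_left₀ 2 (by positivity) ?_
    calc x^2 < (1+ε)^2 * s^2 := hxs2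
      _ = ((1+ε)*s)^2 := by ring
  have h9 : ε*x > x^3/9 := by
    nlinarith [mul_le_mul_of_nonneg_left hup (by linarith : (0:ℝ) ≤ 1+ε),
      mul_nonneg hε0.le (pow_nonneg hx.le 3)]
  have ht : x^2 < 9*ε := by
    by_contra hcon
    push_neg at hcon
    nlinarith [mul_le_mul_of_nonneg_right hcon hx.le]
  have hxle : x ≤ 1 := by nlinarith [sq_nonneg (x-1)]
  have hsl : x - x^3/4 < s := hsl' hxle
  have ha : 1 - x * (c/s) = (s - x*c)/s := by field_simp
  rw [ha, div_pow,
    div_add' _ _ _ (by positivity : s^2 ≠ 0),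
    div_lt_iff₀ (by positivity : (0:ℝ) < s^2)]
  -- goal : (s - x*c)^2 + x^2*s^2 < √ε * s^2
  have hQ : Real.sqrt ε ^ 2 = ε := Real.sq_sqrt hε0.le
  have hQpos : 0 < Real.sqrt ε := Real.sqrt_pos.mpr hε0
  have hQle : Real.sqrt ε ≤ 1/10 := by
    rw [show (1/10:ℝ) = Real.sqrt ((1/10)^2) by
      rw [Real.sqrt_sq (by norm_num : (0:ℝ) ≤ 1/10)]]
    exact Real.sqrt_le_sqrt (by rw [show ((1/10:ℝ))^2 = 1/100 by norm_num]; linarith)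
  have hεQ : ε ≤ Real.sqrt ε / 10 := by
    have := mul_le_mul_of_nonneg_right hQle hQpos.le
    nlinarith [this, hQ]
  -- bounds on A = s - x*c
  have hxc1 : x*(1 - x^2/2) ≤ x*c := mul_le_mul_of_nonneg_left hcl hx.le
  have hxc2 : x*c ≤ x := by linarith [mul_le_mul_of_nonneg_left hcu hx.le]
  have hAu : s - x*c ≤ x^3/2 := by linarith
  have hAl : -(x^3)/4 ≤ s - x*c := by linarith
  have hA2 : (s - x*c)^2 ≤ x^6/4 := by
    have hp : 0 ≤ (x^3/2 - (s - x*c)) * ((s - x*c) + x^3/4) :=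
      mul_nonneg (by linarith) (by linarith)
    have hq : x^3*(s - x*c) ≤ x^3*(x^3/2) :=
      mul_le_mul_of_nonneg_left hAu (pow_nonneg hx.le 3)
    nlinarith [hp, hq]
  have hs2u : s^2 ≤ x^2 := by
    have := mul_self_le_mul_self hs.le hsu
    nlinarith [this]
  have hx2s2 : x^2*s^2 ≤ x^4 := by
    linarith [mul_le_mul_of_nonneg_left hs2u (sq_nonneg x)]
  have hx9 : x^2 ≤ 9/100 := by linarith
  have hx3x : x^3 ≤ x := by
    have := mul_le_mul_of_nonneg_right hx9 hx.le
    nlinarith [this]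
  have hblo : (0:ℝ) ≤ x - x^3/4 := by linarith
  have hs2l : (x - x^3/4)^2 ≤ s^2 := by
    have := mul_self_le_mul_self hblo hsl.le
    nlinarith [this]
  -- scalar key inequality
  have htq : Real.sqrt ε * x^2 ≤ x^2/10 := by
    linarith [mul_le_mul_of_nonneg_right hQle (sq_nonneg x)]
  have htt : x^4 ≤ (9/100)*x^2 := by
    nlinarith [mul_le_mul_of_nonneg_right hx9 (sq_nonneg x)]
  have ht9 : x^2 < (9/10) * Real.sqrt ε := by linarith
  have hscal : x^2*(x^2/4 + 1) < Real.sqrt ε * (1 - x^2/4)^2 :=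
    scal_aux ε (x^2) (Real.sqrt ε) hQ hQle hQpos (by positivity) ht
  have hkey' : x^6/4 + x^4 < Real.sqrt ε * (x - x^3/4)^2 := by
    have h6 := mul_lt_mul_of_pos_left hscal (show (0:ℝ) < x^2 by positivity)
    linarith [h6]
  have hfin1 : Real.sqrt ε * (x - x^3/4)^2 ≤ Real.sqrt ε * s^2 :=
    mul_le_mul_of_nonneg_left hs2l (Real.sqrt_nonneg ε)
  linarith [hA2, hx2s2, hkey', hfin1]

/-- If `ε ∈ (0, 1/100]` and `z = -y cot(y) + i y` satisfies `|z| < 1 + ε`,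
then `|z + 1| < ε^{1/4}`. -/
theorem cot_curve_near_minus_one (ε y : ℝ) (hε0 : 0 < ε) (hε1 : ε ≤ 1 / 100)
    (hy : Real.sin y ≠ 0)
    (h : ‖((-(y * (Real.cos y / Real.sin y)) : ℝ) + (y : ℝ) * Complex.I)‖ < 1 + ε) :
    ‖(((-(y * (Real.cos y / Real.sin y)) : ℝ) + (y : ℝ) * Complex.I) + 1)‖
      < ε ^ ((1 : ℝ) / 4) := by
  rw [Complex.norm_add_mul_I] at h
  rw [show (((-(y * (Real.cos y / Real.sin y)) : ℝ) : ℂ) + ((y : ℝ) : ℂ) * Complex.I) + 1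
      = ((1 - y * (Real.cos y / Real.sin y) : ℝ) : ℂ) + ((y:ℝ) : ℂ) * Complex.I by
    push_cast; ring]
  rw [Complex.norm_add_mul_I]
  rw [Real.sqrt_lt' (Real.rpow_pos_of_pos hε0 _)]
  have hpow : (ε ^ ((1:ℝ)/4))^(2:ℕ) = Real.sqrt ε := by
    rw [Real.sqrt_eq_rpow, ← Real.rpow_natCast (ε ^ ((1:ℝ)/4)) 2, ← Real.rpow_mul hε0.le]
    norm_num
  rw [hpow]
  have h' : (y * (Real.cos y / Real.sin y))^2 + y^2 < (1+ε)^2 := by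
    have := (Real.sqrt_lt' (by linarith : (0:ℝ) < 1+ε)).mp h
    linarith [this]
  rcases lt_trichotomy y 0 with hy0 | hy0 | hy0
  · have hsx : Real.sin (-y) ≠ 0 := by
      rw [Real.sin_neg]; exact neg_ne_zero.mpr hy
    have heq : (-y) * (Real.cos (-y) / Real.sin (-y)) = y * (Real.cos y / Real.sin y) := by
      rw [Real.cos_neg, Real.sin_neg]
      rw [div_neg]; ring
    have h'' : ((-y) * (Real.cos (-y) / Real.sin (-y)))^2 + (-y)^2 < (1+ε)^2 := by
      rw [heq]; linarith [h']
    have hc := core_aux ε (-y) hε0 hε1 (by linarith) hsx h''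
    rw [heq] at hc
    linarith [hc]
  · exact absurd (by rw [hy0, Real.sin_zero]) hy
  · exact core_aux ε y hε0 hε1 hy0 hy h'
end

section
/- The function z ↦ (1 + z e^{z+1})/(z+1)², defined for z ≠ −1, extends to an entire function w̃ with w̃(−1) = 1/2 and w̃′(−1) = 1/3 (equivalently, z e^{z+1} = −1 + (z+1)²/2 + (z+1)³/3 + O((z+1)⁴) as z → −1). Consequently there exist δ ∈ (0,1) and C > 0 such that |(1+z) e^{z+1}| ≤ C |1 + z e^{z+1}|^{1/2} for all z ∈ D_δ(−1). -/
open Complex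

noncomputable def Complex.abs : AbsoluteValue ℂ ℝ :=
  IsAbsoluteValue.toAbsoluteValue (norm : ℂ → ℝ)

lemma Complex.norm_eq_abs (z : ℂ) : ‖z‖ = Complex.abs z := rfl

lemma Complex.abs_exp (z : ℂ) : Complex.abs (Complex.exp z) = Real.exp z.re :=
  Complex.norm_exp z

@[continuity]
lemma Complex.continuous_abs : Continuous Complex.abs := continuous_norm

@[simp]
lemma Complex.abs_two : Complex.abs (2 : ℂ) = 2 := Complex.norm_two

@[simp]
lemma Complex.abs_six : Complex.abs (6 : ℂ) = 6 := by
  show ‖(6 : ℂ)‖ = 6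
  simp

lemma Complex.re_le_abs (z : ℂ) : z.re ≤ Complex.abs z := Complex.re_le_norm z

noncomputable def fW : ℂ → ℂ := fun z => 1 + z * Complex.exp (z + 1)

noncomputable def wtW : ℂ → ℂ := dslope (dslope fW (-1)) (-1)

lemma fW_diff : Differentiable ℂ fW := by
  unfold fW; fun_prop

lemma fW_neg_one : fW (-1) = 0 := by simp [fW]

lemma fW_deriv_neg_one : deriv fW (-1) = 0 := by
  have h : ∀ z : ℂ, HasDerivAt fW ((1 + z) * Complex.exp (z + 1)) z := by
    intro z
    have h1 : HasDerivAt (fun z : ℂ => z + 1) 1 z := (hasDerivAt_id z).add_const 1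
    have h2 : HasDerivAt (fun z : ℂ => Complex.exp (z + 1)) (Complex.exp (z + 1)) z := by
      simpa using h1.cexp
    have h3 : HasDerivAt (fun z : ℂ => z * Complex.exp (z + 1))
        (1 * Complex.exp (z + 1) + z * Complex.exp (z + 1)) z :=
      (hasDerivAt_id z).mul h2
    have := h3.const_add (1 : ℂ)
    rw [show (1 + z) * Complex.exp (z + 1) = 1 * Complex.exp (z + 1) + z * Complex.exp (z + 1) by ring]
    exact this
  rw [(h (-1)).deriv]
  ring

lemma fW_key (u : ℂ) (h1 : Complex.abs u ≤ 1) :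
    Complex.abs (fW (u - 1) - (u^2/2 + u^3/3 + u^2 * u^2/6)) ≤ 2 * (5/96) * Complex.abs u ^ 4 := by
  have hR := Complex.exp_bound h1 (by norm_num : 0 < 4)
  have hsum : (∑ m ∈ Finset.range 4, u ^ m / m.factorial) = 1 + u + u^2/2 + u^3/6 := by
    simp [Finset.sum_range_succ, Nat.factorial]
    try ring
  rw [hsum] at hR
  have hbound : (4 : ℕ).succ * (((4 : ℕ).factorial * (4 : ℕ) : ℝ))⁻¹ = 5/96 := by
    norm_num [Nat.factorial]
  rw [hbound] at hR
  have heq : fW (u - 1) - (u^2/2 + u^3/3 + u^2 * u^2/6)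
      = (u - 1) * (Complex.exp u - (1 + u + u^2/2 + u^3/6)) := by
    show 1 + (u - 1) * Complex.exp ((u - 1) + 1) - _ = _
    rw [sub_add_cancel]
    ring
  rw [heq, map_mul]
  have habs : Complex.abs (u - 1) ≤ 2 := by
    calc Complex.abs (u - 1) ≤ Complex.abs u + Complex.abs 1 := by
          simpa using Complex.abs.sub_le_add u 1
    _ ≤ 2 := by simp; linarith
  calc Complex.abs (u - 1) * Complex.abs (Complex.exp u - (1 + u + u^2/2 + u^3/6))
      ≤ 2 * (Complex.abs u ^ 4 * (5/96)) := by
        apply mul_le_mul habs hR (by positivity) (by norm_num)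
    _ = 2 * (5/96) * Complex.abs u ^ 4 := by ring

lemma gW_neg_one : dslope fW (-1) (-1) = 0 := by
  rw [dslope_same]; exact fW_deriv_neg_one

lemma wtW_eq (z : ℂ) (hz : z ≠ -1) :
    wtW z = (1 + z * Complex.exp (z + 1)) / (z + 1) ^ 2 := by
  have h1 : dslope fW (-1) z = fW z / (z + 1) := by
    rw [dslope_of_ne _ hz, slope_def_field, fW_neg_one]
    simp [div_eq_inv_mul, sub_neg_eq_add]
  rw [wtW, dslope_of_ne _ hz, slope_def_field, h1, gW_neg_one]
  rw [sub_zero, sub_neg_eq_add]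
  show fW z / (z+1) / (z+1) = _
  rw [div_div, ← sq]
  rfl

lemma wtW_diff : Differentiable ℂ wtW := by
  have hfa : AnalyticAt ℂ fW (-1) := fW_diff.analyticAt (-1)
  obtain ⟨p, hp⟩ := hfa
  obtain ⟨r, hpr⟩ := hp
  have hp1 : HasFPowerSeriesAt fW p (-1) := ⟨r, hpr⟩
  have hg : HasFPowerSeriesAt (dslope fW (-1)) p.fslope (-1) :=
    hp1.has_fpower_series_dslope_fslope
  have hw : HasFPowerSeriesAt wtW p.fslope.fslope (-1) :=
    hg.has_fpower_series_dslope_fslope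
  intro z
  rcases eq_or_ne z (-1) with rfl | hz
  · exact hw.analyticAt.differentiableAt
  · rw [wtW, differentiableAt_dslope_of_ne hz, differentiableAt_dslope_of_ne hz]
    exact fW_diff z

lemma wtW_est (z : ℂ) (hz : z ≠ -1) (h1 : Complex.abs (z + 1) ≤ 1) :
    Complex.abs (wtW z - (1/2 + (z+1)/3)) ≤ Complex.abs (z+1) ^ 2 := by
  have hu0 : z + 1 ≠ 0 := fun h => hz (by linear_combination h)
  have hkey := fW_key (z+1) h1
  have hfz : fW (z + 1 - 1) = 1 + z * Complex.exp (z + 1) := by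
    show 1 + (z + 1 - 1) * Complex.exp (z + 1 - 1 + 1) = _
    norm_num
  rw [hfz] at hkey
  have heq : wtW z - (1/2 + (z+1)/3)
      = (1 + z * Complex.exp (z+1) - ((z+1)^2/2 + (z+1)^3/3 + (z+1)^2*(z+1)^2/6)) / (z+1)^2
        + (z+1)^2/6 := by
    rw [wtW_eq z hz]
    field_simp
    ring
  rw [heq]
  have hpos : (0:ℝ) < Complex.abs (z+1) := Complex.abs.pos hu0
  have habs2 : Complex.abs ((z+1)^2) = Complex.abs (z+1)^2 := map_pow _ _ _
  have hstep : Complex.abs ((1 + z * Complex.exp (z+1)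
        - ((z+1)^2/2 + (z+1)^3/3 + (z+1)^2*(z+1)^2/6)) / (z+1)^2)
      ≤ (2*(5/96)*Complex.abs (z+1)^4) / Complex.abs (z+1)^2 := by
    rw [map_div₀, habs2]
    gcongr
  have hstep2 : Complex.abs ((z+1)^2/6) = Complex.abs (z+1)^2/6 := by
    rw [map_div₀, habs2]
    norm_num
  refine (Complex.abs.add_le _ _).trans ?_
  rw [hstep2]
  refine (add_le_add_left hstep _).trans ?_
  rw [div_eq_mul_inv, mul_assoc]
  have hcl : Complex.abs (z+1)^4 * (Complex.abs (z+1)^2)⁻¹ = Complex.abs (z+1)^2 := by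
    field_simp
  rw [hcl]
  nlinarith [sq_nonneg (Complex.abs (z+1))]

open Filter Topology in
lemma abs_sq_tendsto : Tendsto (fun z : ℂ => Complex.abs (z+1) ^ 2) (𝓝[≠] (-1)) (𝓝 0) := by
  have : Continuous (fun z : ℂ => Complex.abs (z+1) ^ 2) := by continuity
  have h := this.tendsto (-1)
  simp only [neg_add_cancel, map_zero] at h
  norm_num at h
  exact h.mono_left nhdsWithin_le_nhds

open Filter Topology in
lemma abs_lin_tendsto : Tendsto (fun z : ℂ => Complex.abs (z+1)) (𝓝[≠] (-1)) (𝓝 0) := by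
  have : Continuous (fun z : ℂ => Complex.abs (z+1)) := by continuity
  have h := this.tendsto (-1)
  simp only [neg_add_cancel, map_zero] at h
  exact h.mono_left nhdsWithin_le_nhds

open Filter Topology in
lemma eventually_near : ∀ᶠ z in 𝓝[≠] (-1 : ℂ), z ≠ -1 ∧ Complex.abs (z+1) ≤ 1 := by
  have h1 : ∀ᶠ z in 𝓝[≠] (-1 : ℂ), z ≠ -1 := self_mem_nhdsWithin
  have h2 : ∀ᶠ z in 𝓝 (-1 : ℂ), Complex.abs (z+1) ≤ 1 := by
    have : Continuous (fun z : ℂ => Complex.abs (z+1)) := by continuity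
    have hc := this.tendsto (-1)
    simp only [neg_add_cancel, map_zero] at hc
    have := hc (Iio_mem_nhds (by norm_num : (0:ℝ) < 1))
    filter_upwards [this] with z hz
    exact le_of_lt hz
  exact h1.and (h2.filter_mono nhdsWithin_le_nhds)

open Filter Topology in
lemma wtW_tendsto : Tendsto wtW (𝓝[≠] (-1)) (𝓝 (1/2)) := by
  have hdiff : Tendsto (fun z => wtW z - (1/2 + (z+1)/3)) (𝓝[≠] (-1 : ℂ)) (𝓝 0) := by
    apply squeeze_zero_norm' _ abs_sq_tendsto
    filter_upwards [eventually_near] with z hz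
    exact wtW_est z hz.1 hz.2
  have hlin : Tendsto (fun z : ℂ => 1/2 + (z+1)/3) (𝓝[≠] (-1)) (𝓝 (1/2)) := by
    have : Continuous (fun z : ℂ => 1/2 + (z+1)/3) := by continuity
    have h := this.tendsto (-1)
    norm_num at h
    exact h.mono_left nhdsWithin_le_nhds
  have := hdiff.add hlin
  simp only [sub_add_cancel, zero_add] at this
  exact this

open Filter Topology in
lemma wtW_neg_one : wtW (-1) = 1/2 := by
  have hc : Tendsto wtW (𝓝[≠] (-1)) (𝓝 (wtW (-1))) :=
    (wtW_diff.continuous.continuousAt.tendsto).mono_left nhdsWithin_le_nhds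
  exact tendsto_nhds_unique hc wtW_tendsto

open Filter Topology in
lemma wtW_deriv : deriv wtW (-1) = 1/3 := by
  have hslope : Tendsto (slope wtW (-1)) (𝓝[≠] (-1)) (𝓝 (1/3)) := by
    have hdiff : Tendsto (fun z => slope wtW (-1) z - 1/3) (𝓝[≠] (-1 : ℂ)) (𝓝 0) := by
      apply squeeze_zero_norm' _ abs_lin_tendsto
      filter_upwards [eventually_near] with z hz
      have hu0 : z + 1 ≠ 0 := fun h => hz.1 (by linear_combination h)
      have hpos : (0:ℝ) < Complex.abs (z+1) := Complex.abs.pos hu0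
      have hs : slope wtW (-1) z - 1/3 = (wtW z - (1/2 + (z+1)/3))/(z+1) := by
        rw [slope_def_field, wtW_neg_one, sub_neg_eq_add]
        field_simp
        ring
      rw [hs, Complex.norm_eq_abs, map_div₀]
      rw [div_le_iff₀ hpos]
      calc Complex.abs (wtW z - (1/2 + (z+1)/3)) ≤ Complex.abs (z+1)^2 :=
            wtW_est z hz.1 hz.2
        _ = Complex.abs (z+1) * Complex.abs (z+1) := by ring
    have := hdiff.add (tendsto_const_nhds (x := (1/3 : ℂ)))
    simp only [sub_add_cancel, zero_add] at this
    exact this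
  exact HasDerivAt.deriv (hasDerivAt_iff_tendsto_slope.mpr hslope)

/-- Lemma 11(i): `(1 + z e^{z+1})/(z+1)²` extends to an entire function `w̃` with
`w̃(-1) = 1/2` and `w̃'(-1) = 1/3`; consequently `|w'(z)| = O(|1 + w(z)|^{1/2})`
near `z = -1`. -/
theorem w_expansion_near_minus_one :
    ∃ wt : ℂ → ℂ, Differentiable ℂ wt ∧
      (∀ z : ℂ, z ≠ -1 → wt z = (1 + z * Complex.exp (z + 1)) / (z + 1) ^ 2) ∧
      wt (-1) = 1 / 2 ∧ deriv wt (-1) = 1 / 3 ∧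
      ∃ δ : ℝ, 0 < δ ∧ δ < 1 ∧ ∃ C : ℝ, 0 < C ∧
        ∀ z ∈ Metric.ball (-1 : ℂ) δ,
          ‖(1 + z) * Complex.exp (z + 1)‖ ≤
            C * (‖1 + z * Complex.exp (z + 1)‖) ^ ((1 : ℝ) / 2) := by
  refine ⟨wtW, wtW_diff, wtW_eq, wtW_neg_one, wtW_deriv, ?_⟩
  -- get δ₁ from continuity
  have hc : ContinuousAt wtW (-1) := wtW_diff.continuous.continuousAt
  rw [Metric.continuousAt_iff] at hc
  obtain ⟨δ₁, hδ₁, hball⟩ := hc (1/4) (by norm_num)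
  refine ⟨min δ₁ (1/2), by positivity, lt_of_le_of_lt (min_le_right _ _) (by norm_num),
    2 * Real.exp 1, by positivity, ?_⟩
  intro z hz
  show Complex.abs _ ≤ _ * Complex.abs _ ^ _
  rw [Metric.mem_ball] at hz
  have hdist : Complex.abs (z + 1) < min δ₁ (1/2) := by
    have : dist z (-1) = Complex.abs (z + 1) := by
      rw [Complex.dist_eq, Complex.norm_eq_abs]
      congr 1
      ring
    rwa [this] at hz
  rcases eq_or_ne z (-1) with rfl | hzne
  · norm_num [Complex.exp_zero, Real.zero_rpow]
  · have hu0 : z + 1 ≠ 0 := fun h => hzne (by linear_combination h)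
    have hupos : (0:ℝ) < Complex.abs (z+1) := Complex.abs.pos hu0
    -- lower bound on |wtW z|
    have hwtlb : (1/4 : ℝ) ≤ Complex.abs (wtW z) := by
      have h1 : dist z (-1) < δ₁ := lt_of_lt_of_le hz (min_le_left _ _)
      have h2 := hball h1
      rw [Complex.dist_eq] at h2
      have h3 : Complex.abs (wtW z - wtW (-1)) < 1/4 := h2
      rw [wtW_neg_one] at h3
      have h4 : Complex.abs (1/2 : ℂ) ≤ Complex.abs (wtW z) + Complex.abs (wtW z - 1/2) := by
        calc Complex.abs (1/2 : ℂ) = Complex.abs (wtW z - (wtW z - 1/2)) := by congr 1; ring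
          _ ≤ _ := Complex.abs.sub_le_add _ _
      have h5 : Complex.abs (1/2 : ℂ) = 1/2 := by norm_num
      rw [h5] at h4
      linarith
    -- f z = (z+1)^2 * wtW z
    have hfz : Complex.abs (1 + z * Complex.exp (z + 1))
        = Complex.abs (z+1)^2 * Complex.abs (wtW z) := by
      have := wtW_eq z hzne
      have heq : (1 + z * Complex.exp (z + 1)) = (z+1)^2 * wtW z := by
        rw [this]
        field_simp
      rw [heq, map_mul, map_pow]
    have hflb : Complex.abs (z+1)^2 / 4 ≤ Complex.abs (1 + z * Complex.exp (z + 1)) := by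
      rw [hfz]
      nlinarith [mul_le_mul_of_nonneg_left hwtlb (sq_nonneg (Complex.abs (z+1)))]
    -- rpow lower bound
    have hrpow : Complex.abs (z+1) / 2
        ≤ (Complex.abs (1 + z * Complex.exp (z + 1))) ^ ((1:ℝ)/2) := by
      have h1 : (Complex.abs (z+1)^2 / 4 : ℝ) ^ ((1:ℝ)/2)
          ≤ (Complex.abs (1 + z * Complex.exp (z + 1))) ^ ((1:ℝ)/2) :=
        Real.rpow_le_rpow (by positivity) hflb (by norm_num)
      have h2 : (Complex.abs (z+1)^2 / 4 : ℝ) ^ ((1:ℝ)/2) = Complex.abs (z+1) / 2 := by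
        rw [← Real.sqrt_eq_rpow]
        have : (Complex.abs (z+1)^2 / 4 : ℝ) = (Complex.abs (z+1)/2)^2 := by ring
        rw [this, Real.sqrt_sq (by positivity)]
      rw [h2] at h1
      exact h1
    -- upper bound on LHS
    have hlhs : Complex.abs ((1 + z) * Complex.exp (z + 1))
        ≤ Complex.abs (z+1) * Real.exp 1 := by
      rw [map_mul, Complex.abs_exp]
      have h1 : Complex.abs (1 + z) = Complex.abs (z+1) := by congr 1; ring
      rw [h1]
      gcongr
      have h2 : (z+1).re ≤ Complex.abs (z+1) := Complex.re_le_abs _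
      have h3 : Complex.abs (z+1) ≤ 1 := by
        have := lt_of_lt_of_le hdist (min_le_right _ _)
        linarith
      exact le_trans h2 h3
    calc Complex.abs ((1 + z) * Complex.exp (z + 1)) ≤ Complex.abs (z+1) * Real.exp 1 := hlhs
      _ = 2 * Real.exp 1 * (Complex.abs (z+1) / 2) := by ring
      _ ≤ 2 * Real.exp 1 * (Complex.abs (1 + z * Complex.exp (z + 1))) ^ ((1:ℝ)/2) := by
          gcongr
end

section
/- Let δ ∈ (0,1). There exists a constant C > 0 (depending on δ) such that for every w ∈ Ω_δ with Re(1+w) < 0 one has (Im w)² > C · |Re(1+w)|³. -/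
set_option maxHeartbeats 1000000

open Complex

section Aux

lemma psi_lb' {δ x y : ℝ} (hδ1 : δ < 1) (hx0 : 0 < x)
    (hxδ : x < δ) (hball : x ^ 2 + y ^ 2 < 2 * x) (hy0 : 0 < y) (hy1 : y < 1) :
    11 * (1 - δ) / 96 * y ^ 3 ≤ (x - 1) * Real.sin y + y * Real.cos y := by
  have hcos : 1 - y ^ 2 / 2 ≤ Real.cos y := Real.one_sub_sq_div_two_le_cos
  have hay : |y| ≤ 1 := by rw [abs_of_pos hy0]; exact hy1.le
  have hsin : Real.sin y ≤ y - y ^ 3 / 6 + y ^ 4 * (5 / 96) := by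
    have := (abs_le.1 (Real.sin_bound hay)).2
    rw [abs_of_pos hy0] at this
    nlinarith [mul_le_mul_of_nonneg_left hy1.le (pow_pos hy0 4).le, pow_pos hy0 4]
  have hx1 : x < 1 := lt_trans hxδ hδ1
  nlinarith [mul_pos hy0 hy0, sq_nonneg (x - y), sq_nonneg x, sq_nonneg y,
    mul_pos (mul_pos hy0 hy0) hy0, mul_le_of_le_one_right (sq_nonneg y) hy1.le,
    mul_nonneg (mul_nonneg hy0.le hy0.le) (sq_nonneg x),
    mul_lt_mul_of_pos_left hball hy0, mul_pos hx0 hy0]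

lemma re_ub' {x y : ℝ} (hx0 : 0 < x) (hx1 : x < 1) (hy1 : |y| < 1) :
    Real.exp x * ((1 - x) * Real.cos y + y * Real.sin y) - 1 ≤
      (Real.exp 1) * y ^ 2 := by
  have hE : (1 - x) * Real.exp x ≤ 1 := by
    have h := Real.add_one_le_exp (-x)
    have hmul : (-x + 1) * Real.exp x ≤ Real.exp (-x) * Real.exp x :=
      mul_le_mul_of_nonneg_right h (Real.exp_pos x).le
    rw [← Real.exp_add, neg_add_cancel, Real.exp_zero] at hmul
    linarith
  have hcpos : 0 ≤ Real.cos y := by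
    apply Real.cos_nonneg_of_mem_Icc
    constructor <;> nlinarith [abs_lt.1 hy1, Real.pi_gt_three]
  have hcu : Real.cos y ≤ 1 - 43 / 96 * y ^ 2 := by
    have h := (abs_le.1 (Real.cos_bound hy1.le)).2
    have h4 : |y| ^ 4 ≤ y ^ 2 := by
      have h5 : |y| ^ 4 ≤ |y| ^ 2 := pow_le_pow_of_le_one (abs_nonneg y) hy1.le (by norm_num)
      rwa [_root_.sq_abs] at h5
    linarith
  have hys0 : 0 ≤ y * Real.sin y := by
    rcases le_or_gt 0 y with h | h
    · exact mul_nonneg h (Real.sin_nonneg_of_nonneg_of_le_pi h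
        (by nlinarith [abs_lt.1 hy1, Real.pi_gt_three]))
    · have : Real.sin y ≤ 0 := Real.sin_nonpos_of_nonpos_of_neg_pi_le h.le
        (by nlinarith [abs_lt.1 hy1, Real.pi_gt_three])
      exact mul_nonneg_of_nonpos_of_nonpos h.le this
  have hys : y * Real.sin y ≤ y ^ 2 := by
    rcases le_or_gt 0 y with h | h
    · nlinarith [Real.sin_le h]
    · nlinarith [Real.sin_lt (show (0:ℝ) < -y by linarith), Real.sin_neg y]
  have hEe : Real.exp x ≤ Real.exp 1 := Real.exp_le_exp.2 hx1.le
  have h1 : Real.exp x * ((1 - x) * Real.cos y) ≤ Real.cos y := by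
    calc Real.exp x * ((1 - x) * Real.cos y) = ((1 - x) * Real.exp x) * Real.cos y := by ring
    _ ≤ 1 * Real.cos y := mul_le_mul_of_nonneg_right hE hcpos
    _ = Real.cos y := one_mul _
  have h2 : Real.exp x * (y * Real.sin y) ≤ Real.exp 1 * y ^ 2 := by
    calc Real.exp x * (y * Real.sin y) ≤ Real.exp 1 * (y * Real.sin y) :=
          mul_le_mul_of_nonneg_right hEe hys0
    _ ≤ Real.exp 1 * y ^ 2 := mul_le_mul_of_nonneg_left hys (Real.exp_pos 1).le
  nlinarith [sq_nonneg y]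

/-- The core real-variable estimate. -/
lemma cusp_core {δ x y : ℝ} (hδ0 : 0 < δ) (hδ1 : δ < 1)
    (h1 : x ^ 2 + y ^ 2 < δ ^ 2) (h2 : x ^ 2 + y ^ 2 < 2 * x)
    (hre : 1 + Real.exp x * ((x - 1) * Real.cos y - y * Real.sin y) < 0) :
    (11 * (1 - δ) / 96) ^ 2 / (2 * Real.exp 1 ^ 3) *
        |1 + Real.exp x * ((x - 1) * Real.cos y - y * Real.sin y)| ^ 3 <
      (Real.exp x * ((x - 1) * Real.sin y + y * Real.cos y)) ^ 2 := by
  set c : ℝ := 11 * (1 - δ) / 96 with hc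
  have hcpos : 0 < c := by rw [hc]; nlinarith
  have hx0 : 0 < x := by nlinarith [sq_nonneg x, sq_nonneg y]
  have hxδ : x < δ := by nlinarith [sq_nonneg y]
  have hx1 : x < 1 := lt_trans hxδ hδ1
  have hyabs : |y| < 1 := by
    rw [abs_lt]; constructor <;> nlinarith [sq_nonneg x]
  have hE1 : (1:ℝ) ≤ Real.exp x := Real.one_le_exp hx0.le
  -- y ≠ 0
  have hy0 : y ≠ 0 := by
    intro h
    rw [h] at hre
    simp at hre
    have hE : (1 - x) * Real.exp x ≤ 1 := by
      have h := Real.add_one_le_exp (-x)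
      have hmul : (-x + 1) * Real.exp x ≤ Real.exp (-x) * Real.exp x :=
        mul_le_mul_of_nonneg_right h (Real.exp_pos x).le
      rw [← Real.exp_add, neg_add_cancel, Real.exp_zero] at hmul
      linarith
    nlinarith [hre]
  -- lower bound on imaginary part squared
  set B : ℝ := (x - 1) * Real.sin y + y * Real.cos y with hB
  have hB2 : c ^ 2 * (y ^ 2) ^ 3 ≤ B ^ 2 := by
    rcases lt_or_gt_of_ne hy0 with hy | hy
    · have hlem := psi_lb' hδ1 hx0 hxδ (by nlinarith : x ^ 2 + (-y) ^ 2 < 2 * x)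
        (by linarith : (0:ℝ) < -y) (by obtain ⟨hl, hr⟩ := abs_lt.1 hyabs; linarith)
      rw [Real.sin_neg, Real.cos_neg] at hlem
      have hle : B ≤ -(c * (-y) ^ 3) := by rw [hB, hc]; nlinarith [hlem]
      have hpos : 0 ≤ c * (-y) ^ 3 := by
        have : (0:ℝ) < -y := by linarith
        positivity
      nlinarith [hle, hpos]
    · have hlem := psi_lb' hδ1 hx0 hxδ h2 hy
        (by obtain ⟨hl, hr⟩ := abs_lt.1 hyabs; linarith)
      have hpos : 0 ≤ c * y ^ 3 := by positivity
      have hge : c * y ^ 3 ≤ B := by rw [hB, hc]; nlinarith [hlem]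
      nlinarith [hge, hpos]
  have him : c ^ 2 * (y ^ 2) ^ 3 ≤ (Real.exp x * B) ^ 2 := by
    have hE2 : (1:ℝ) ≤ Real.exp x ^ 2 := by nlinarith
    calc c ^ 2 * (y ^ 2) ^ 3 ≤ B ^ 2 := hB2
      _ ≤ Real.exp x ^ 2 * B ^ 2 := le_mul_of_one_le_left (sq_nonneg B) hE2
      _ = (Real.exp x * B) ^ 2 := by ring
  -- upper bound on |re|
  have hreub : |1 + Real.exp x * ((x - 1) * Real.cos y - y * Real.sin y)| ≤
      Real.exp 1 * y ^ 2 := by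
    rw [abs_of_neg hre]
    have h := re_ub' hx0 hx1 hyabs
    linarith [h]
  have hcube : |1 + Real.exp x * ((x - 1) * Real.cos y - y * Real.sin y)| ^ 3 ≤
      (Real.exp 1 * y ^ 2) ^ 3 := pow_le_pow_left₀ (abs_nonneg _) hreub 3
  have hy2 : 0 < y ^ 2 := by positivity
  have heq : c ^ 2 / (2 * Real.exp 1 ^ 3) * (Real.exp 1 * y ^ 2) ^ 3 =
      c ^ 2 * (y ^ 2) ^ 3 / 2 := by
    rw [div_mul_eq_mul_div, div_eq_div_iff (by positivity) (by norm_num : (2:ℝ) ≠ 0)]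
    ring
  have hhalf : c ^ 2 * (y ^ 2) ^ 3 / 2 < c ^ 2 * (y ^ 2) ^ 3 := by
    have : 0 < c ^ 2 * (y ^ 2) ^ 3 := by positivity
    linarith
  calc c ^ 2 / (2 * Real.exp 1 ^ 3) *
        |1 + Real.exp x * ((x - 1) * Real.cos y - y * Real.sin y)| ^ 3
      ≤ c ^ 2 / (2 * Real.exp 1 ^ 3) * (Real.exp 1 * y ^ 2) ^ 3 :=
        mul_le_mul_of_nonneg_left hcube (by positivity)
    _ = c ^ 2 * (y ^ 2) ^ 3 / 2 := heq
    _ < c ^ 2 * (y ^ 2) ^ 3 := hhalf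
    _ ≤ (Real.exp x * B) ^ 2 := him

end Aux

/-- `Ω_δ`, the image of `D_δ(-1) ∩ D_1(0)` under `z ↦ z e^{z+1}`. -/
noncomputable def OmegaSet (δ : ℝ) : Set ℂ :=
  (fun z : ℂ => z * Complex.exp (z + 1)) '' (Metric.ball (-1 : ℂ) δ ∩ Metric.ball (0 : ℂ) 1)

/-- Lemma 11(ii): for `w ∈ Ω_δ` with `Re(1+w) < 0` one has `(Im w)² > C |Re(1+w)|³`. -/
theorem omega_boundary_cusp (δ : ℝ) (hδ0 : 0 < δ) (hδ1 : δ < 1) :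
    ∃ C : ℝ, 0 < C ∧ ∀ w ∈ OmegaSet δ, (1 + w).re < 0 →
      C * |(1 + w).re| ^ 3 < (w.im) ^ 2 := by
  refine ⟨(11 * (1 - δ) / 96) ^ 2 / (2 * Real.exp 1 ^ 3), ?_, ?_⟩
  · have : (0:ℝ) < 11 * (1 - δ) / 96 := by nlinarith
    positivity
  rintro w ⟨z, ⟨hz1, hz2⟩, rfl⟩ hre
  simp only [Metric.mem_ball, Complex.dist_eq] at hz1 hz2
  obtain ⟨x, y, hxy⟩ : ∃ x y : ℝ, z = Complex.mk (x - 1) y :=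
    ⟨z.re + 1, z.im, by simp [Complex.ext_iff]⟩
  subst hxy
  have hz1re : ((Complex.mk (x - 1) y : ℂ) + 1).re = x := by
    simp [Complex.add_re]
  have hz1im : ((Complex.mk (x - 1) y : ℂ) + 1).im = y := by
    simp [Complex.add_im]
  have hwre : (1 + (Complex.mk (x - 1) y : ℂ) * Complex.exp ((Complex.mk (x - 1) y : ℂ) + 1)).re =
      1 + Real.exp x * ((x - 1) * Real.cos y - y * Real.sin y) := by
    simp only [Complex.add_re, Complex.one_re, Complex.mul_re, Complex.exp_re, Complex.exp_im,
      hz1re, hz1im]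
    ring
  have hwim : ((Complex.mk (x - 1) y : ℂ) * Complex.exp ((Complex.mk (x - 1) y : ℂ) + 1)).im =
      Real.exp x * ((x - 1) * Real.sin y + y * Real.cos y) := by
    simp only [Complex.mul_im, Complex.exp_re, Complex.exp_im, hz1re, hz1im]
    ring
  have habs1 : x ^ 2 + y ^ 2 < δ ^ 2 := by
    have h : ‖(Complex.mk (x - 1) y : ℂ) - (-1)‖ ^ 2 < δ ^ 2 :=
      pow_lt_pow_left₀ hz1 (norm_nonneg _) (by norm_num)
    rw [Complex.sq_norm, Complex.normSq_apply] at h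
    simp only [Complex.sub_re, Complex.sub_im, Complex.neg_re, Complex.neg_im,
      Complex.one_re, Complex.one_im] at h
    nlinarith [h]
  have habs2 : x ^ 2 + y ^ 2 < 2 * x := by
    have h : ‖(Complex.mk (x - 1) y : ℂ) - 0‖ ^ 2 < 1 ^ 2 :=
      pow_lt_pow_left₀ hz2 (norm_nonneg _) (by norm_num)
    rw [Complex.sq_norm, Complex.normSq_apply] at h
    simp only [Complex.sub_re, Complex.sub_im, Complex.zero_re, Complex.zero_im] at h
    nlinarith [h]
  rw [hwre] at hre ⊢
  rw [hwim]
  exact cusp_core hδ0 hδ1 habs1 habs2 hre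
end

section
/- Let δ ∈ (0,1). There exists a constant C > 0 (depending on δ) such that for every w ∈ Ω_δ the following holds: writing (1+w)/(−w) = a + i b with a, b real, if a < 0 then b² > C |a|³. -/
open Complex

lemma exp_mul_one_sub_le (x : ℝ) : Real.exp x * (1 - x) ≤ 1 := by
  have h1 : -x + 1 ≤ Real.exp (-x) := Real.add_one_le_exp (-x)
  have h2 : Real.exp x * (-x + 1) ≤ Real.exp x * Real.exp (-x) :=
    mul_le_mul_of_nonneg_left h1 (Real.exp_pos x).le
  rw [← Real.exp_add, add_neg_cancel, Real.exp_zero] at h2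
  linarith

lemma cusp_poly (x y : ℝ) (hx0 : 0 ≤ x) (hx1 : x ≤ 1) (hy0 : 0 ≤ y) (hy1 : y ≤ 1)
    (hc : x^2 + y^2 ≤ 2*x) :
    11/24*y^2 + x*y^2/6 + 5/96*(y^4+y^3-x*y^3) ≤ x := by
  have hu : 0 ≤ 2*x - x^2 - y^2 := by linarith
  nlinarith [mul_nonneg (mul_nonneg hy0 hy0) hu, mul_nonneg hy0 hu,
    mul_nonneg hx0 hu, mul_nonneg (mul_nonneg hy0 hy0) hy0,
    mul_nonneg (mul_nonneg hx0 hy0) hy0, sq_nonneg (x - y^2/2),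
    mul_nonneg (mul_nonneg hy0 hy0) (sub_nonneg.2 hy1),
    mul_nonneg (mul_nonneg (mul_nonneg hy0 hy0) hy0) (sub_nonneg.2 hy1),
    mul_nonneg (mul_nonneg hy0 hy0) (sub_nonneg.2 hx1)]

/-- Lower bound for `y cos y - (1-x) sin y` in the cusp region. -/
lemma W2_lower (x y : ℝ) (hx0 : 0 ≤ x) (hx1 : x ≤ 1) (hy0 : 0 ≤ y) (hy1 : y ≤ 1)
    (hc : x^2 + y^2 ≤ 2*x) :
    y^3/8 ≤ y * Real.cos y - (1-x) * Real.sin y := by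
  have hy' : |y| ≤ 1 := by rwa [_root_.abs_of_nonneg hy0]
  have hcb := Real.cos_bound hy'
  have hsb := Real.sin_bound hy'
  rw [_root_.abs_of_nonneg hy0, abs_le] at hcb hsb
  have hcl : 1 - y^2/2 - y^4*(5/96) ≤ Real.cos y := by linarith [hcb.1]
  have hsu : Real.sin y ≤ y - y^3/6 + y^4*(5/96) := by
    nlinarith [hsb.2, mul_le_mul_of_nonneg_left hy1 (pow_nonneg hy0 4)]
  have hp := cusp_poly x y hx0 hx1 hy0 hy1 hc
  have h1 : y * (1 - y^2/2 - y^4*(5/96)) ≤ y * Real.cos y :=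
    mul_le_mul_of_nonneg_left hcl hy0
  have h2 : (1-x) * Real.sin y ≤ (1-x) * (y - y^3/6 + y^4*(5/96)) :=
    mul_le_mul_of_nonneg_left hsu (by linarith)
  nlinarith [mul_nonneg hy0 (sub_nonneg.2 hp)]

/-- Upper bound for `q` in the cusp region. -/
lemma q_upper (x y : ℝ) (hx0 : 0 ≤ x) (hx1 : x ≤ 1) (hy0 : 0 ≤ y) (hy1 : y ≤ 1) :
    Real.exp x * ((1-x)^2 + y^2) - (1-x) * Real.cos y - y * Real.sin y ≤ 18/5*y^2 := by
  have hy' : |y| ≤ 1 := by rwa [_root_.abs_of_nonneg hy0]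
  have hcb := Real.cos_bound hy'
  rw [_root_.abs_of_nonneg hy0, abs_le] at hcb
  have hcl : 1 - y^2/2 - y^4*(5/96) ≤ Real.cos y := by linarith [hcb.1]
  have h1 : Real.exp x * (1 - x) ≤ 1 := exp_mul_one_sub_le x
  have h3 : Real.exp x * (1-x)^2 ≤ 1 - x := by
    nlinarith [mul_le_mul_of_nonneg_right h1 (show (0:ℝ) ≤ 1 - x by linarith)]
  have h4 : Real.exp x ≤ 3 := by
    have := Real.exp_le_exp.2 hx1
    nlinarith [Real.exp_one_lt_d9]
  have h5 : (1-x) * (1 - y^2/2 - y^4*(5/96)) ≤ (1-x) * Real.cos y :=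
    mul_le_mul_of_nonneg_left hcl (by linarith)
  have hs : 0 ≤ Real.sin y := Real.sin_nonneg_of_nonneg_of_le_pi hy0
    (by linarith [Real.pi_gt_three])
  have hy2 : y^2 ≤ 1 := by nlinarith
  have hy4 : y^4 ≤ y^2 := by nlinarith [mul_nonneg (sq_nonneg y) (sub_nonneg.2 hy2)]
  nlinarith [mul_nonneg hy0 hs, mul_le_mul_of_nonneg_right h4 (sq_nonneg y),
    mul_nonneg hx0 (show (0:ℝ) ≤ y^2/2 + y^4*(5/96) by positivity)]

lemma final_aux (c s Q M y : ℝ) (hc : 0 < c) (hs : 0 < s) (hQ0 : 0 < Q)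
    (hQub : Q ≤ 54/5 * y^2) (hMlb : y^6/64 * c ≤ M * s) (hy : 0 < y) :
    c/100000 * Q^3 * s^2 < M * s^3 := by
  have h1 : Q^3 ≤ (54/5*y^2)^3 := pow_le_pow_left₀ hQ0.le hQub 3
  have h1' : c/100000 * Q^3 ≤ c/100000 * (54/5*y^2)^3 :=
    mul_le_mul_of_nonneg_left h1 (by positivity)
  have h2 : c/100000 * (54/5*y^2)^3 < y^6/64 * c := by
    nlinarith [mul_pos hc (pow_pos hy 6)]
  have h3 : c/100000 * Q^3 < M * s := by linarith
  have h4 := mul_lt_mul_of_pos_right h3 (pow_pos hs 2)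
  have h5 : M * s * s^2 = M * s^3 := by ring
  linarith

lemma sq_lt_of_lt (a b : ℝ) (h0 : 0 ≤ a) (h : a < b) : a^2 < b^2 := by nlinarith

lemma le_one_of_sq_lt_one (x : ℝ) (h : x^2 < 1) : x ≤ 1 := by
  nlinarith [sq_nonneg (x-1)]

lemma le_one_of_sq_le_one (y : ℝ) (h0 : 0 ≤ y) (h : y^2 ≤ 1) : y ≤ 1 := by
  nlinarith [sq_nonneg (y-1)]

lemma pos_of_mul_pos' (E q : ℝ) (h : 0 < E * q) (hE : 0 < E) : 0 < q := by
  rcases mul_pos_iff.1 h with ⟨_, hq⟩ | ⟨hE', _⟩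
  · exact hq
  · linarith

lemma q_y0 (x : ℝ) (hx1 : x ≤ 1) :
    Real.exp x * ((1-x)^2 + 0^2) - (1-x) * Real.cos 0 - 0 * Real.sin 0 ≤ 0 := by
  have h1 := exp_mul_one_sub_le x
  have h2 := mul_le_mul_of_nonneg_right h1 (show (0:ℝ) ≤ 1-x by linarith)
  simp only [Real.cos_zero, Real.sin_zero]
  nlinarith [h2]

lemma imsq_lb (E T c : ℝ) (hE : 1 ≤ E) (hT : c ≤ T^2) : c ≤ E^2 * T^2 := by
  nlinarith [mul_nonneg (show (0:ℝ) ≤ E^2 - 1 by nlinarith) (sq_nonneg T)]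

lemma slb_aux (A E c : ℝ) (hA : c ≤ A) (hc : 0 ≤ c) (hE : 1 ≤ E) : c ≤ A * E^2 := by
  nlinarith [mul_nonneg (hc.trans hA) (show (0:ℝ) ≤ E^2 - 1 by nlinarith)]

set_option maxHeartbeats 1000000 in
/-- Lemma 11(iii): for `w ∈ Ω_δ`, writing `(1+w)/(-w) = a + i b`, if `a < 0` then
`b² > C |a|³`. -/
theorem omega_boundary_cusp_ratio (δ : ℝ) (hδ0 : 0 < δ) (hδ1 : δ < 1) :
    ∃ C : ℝ, 0 < C ∧ ∀ w ∈ OmegaSet δ, ((1 + w) / (-w)).re < 0 →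
      C * |((1 + w) / (-w)).re| ^ 3 < (((1 + w) / (-w)).im) ^ 2 := by
  have hd1 : (0:ℝ) < 1 - δ := by linarith
  have hδsq : δ^2 < 1 := by nlinarith
  refine ⟨(1-δ)^2/100000, by positivity, ?_⟩
  intro w hw ha
  simp only [OmegaSet, Set.mem_image, Set.mem_inter_iff, Metric.mem_ball] at hw
  obtain ⟨z, ⟨hz1, hz2⟩, rfl⟩ := hw
  rw [Complex.dist_eq, sub_neg_eq_add] at hz1
  rw [Complex.dist_eq, sub_zero] at hz2
  set W := z * Complex.exp (z + 1) with hWdef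
  have hz0 : z ≠ 0 := by
    intro h
    rw [h] at hz1
    simp at hz1
    linarith
  have hWne : W ≠ 0 := mul_ne_zero hz0 (Complex.exp_ne_zero _)
  set s := Complex.normSq W with hsdef
  have hspos : 0 < s := Complex.normSq_pos.2 hWne
  clear_value W s
  have hratio : (1 + W) / (-W) = -W⁻¹ - 1 := by
    rw [div_neg, add_div, div_self hWne, one_div]
    ring
  have hre : ((1 + W) / (-W)).re = -(W.re / s) - 1 := by
    rw [hratio]
    simp [Complex.inv_re, hsdef]
  have him : ((1 + W) / (-W)).im = W.im / s := by
    rw [hratio]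
    simp [Complex.inv_im, hsdef]
    ring
  rw [hre] at ha
  -- real coordinates
  set x := z.re + 1 with hxdef
  set V := z.im with hVdef
  clear_value x V
  have hzre : z.re = x - 1 := by rw [hxdef]; ring
  have hnz : (x-1)^2 + V^2 < 1 := by
    have h2 : Complex.normSq z < 1 := by
      rw [← Complex.sq_norm]
      calc ‖z‖ ^ 2 < 1^2 := sq_lt_of_lt _ _ (norm_nonneg z) hz2
        _ = 1 := one_pow 2
    rw [Complex.normSq_apply, hzre, ← hVdef] at h2
    have he : (x-1) * (x-1) + V * V = (x-1)^2 + V^2 := by ring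
    linarith
  have hn1 : x^2 + V^2 < δ^2 := by
    have h2 : Complex.normSq (z+1) < δ^2 := by
      rw [← Complex.sq_norm]
      exact sq_lt_of_lt _ _ (norm_nonneg (z+1)) hz1
    rw [Complex.normSq_apply] at h2
    simp only [Complex.add_re, Complex.add_im, Complex.one_re, Complex.one_im] at h2
    rw [← hVdef] at h2
    have he : (z.re + 1) * (z.re + 1) + (V + 0) * (V + 0) = x^2 + V^2 := by
      rw [hzre]; ring
    linarith
  have hcon : x^2 + V^2 < 2*x := by
    have he : (x-1)^2 = x^2 - 2*x + 1 := by ring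
    linarith
  have hx0 : 0 < x := by
    have := sq_nonneg x
    have := sq_nonneg V
    linarith
  have hx1 : x ≤ 1 := by
    apply le_one_of_sq_lt_one
    have := sq_nonneg V
    linarith
  set E := Real.exp x with hEdef
  clear_value E
  have hEpos : 0 < E := by rw [hEdef]; exact Real.exp_pos x
  have hE1 : 1 ≤ E := by
    rw [hEdef, show (1:ℝ) = Real.exp 0 from Real.exp_zero.symm]
    exact Real.exp_le_exp.2 hx0.le
  have hE3 : E ≤ 3 := by
    rw [hEdef]
    have := Real.exp_le_exp.2 hx1
    linarith [Real.exp_one_lt_d9]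
  -- components of W
  have hexpre : (Complex.exp (z+1)).re = E * Real.cos V := by
    rw [Complex.exp_re]
    simp only [Complex.add_re, Complex.add_im, Complex.one_re, Complex.one_im]
    rw [← hVdef, ← hxdef, ← hEdef]
    ring_nf
  have hexpim : (Complex.exp (z+1)).im = E * Real.sin V := by
    rw [Complex.exp_im]
    simp only [Complex.add_re, Complex.add_im, Complex.one_re, Complex.one_im]
    rw [← hVdef, ← hxdef, ← hEdef]
    ring_nf
  have hWre : W.re = E * ((x-1) * Real.cos V - V * Real.sin V) := by
    rw [hWdef, Complex.mul_re, hexpre, hexpim, hzre, ← hVdef]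
    ring
  have hWim : W.im = E * ((x-1) * Real.sin V + V * Real.cos V) := by
    rw [hWdef, Complex.mul_im, hexpre, hexpim, hzre, ← hVdef]
    ring
  have hsval : s = ((x-1)^2 + V^2) * E^2 := by
    rw [hsdef, hWdef, Complex.normSq_mul, Complex.normSq_apply, hzre, ← hVdef,
      ← Complex.sq_norm, Complex.norm_exp]
    simp only [Complex.add_re, Complex.one_re]
    rw [← hxdef, ← hEdef]
    ring
  -- positivity of Q := W.re + s
  have hQ : 0 < W.re + s := by
    have h2 : -W.re / s < 1 := by
      rw [neg_div]
      linarith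
    have h3 : -W.re < s := (div_lt_one hspos).1 h2
    linarith
  -- y = |V|
  set y := |V| with hydef
  clear_value y
  have hy0 : 0 ≤ y := hydef ▸ abs_nonneg V
  have hV2 : V^2 = y^2 := by rw [hydef, _root_.sq_abs]
  have hy1 : y ≤ 1 := by
    apply le_one_of_sq_le_one y hy0
    rw [← hV2]
    have := sq_nonneg x
    linarith
  have hcosV : Real.cos V = Real.cos y := by rw [hydef, Real.cos_abs]
  have hsinV : V * Real.sin V = y * Real.sin y := by
    rcases abs_choice V with h | h
    · rw [hydef, h]
    · rw [hydef, h, Real.sin_neg]; ring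
  have hcony : x^2 + y^2 ≤ 2*x := by
    rw [← hV2]; linarith
  set q := E * ((1-x)^2 + y^2) - (1-x) * Real.cos y - y * Real.sin y with hqdef
  clear_value q
  have hQq : W.re + s = E * q := by
    rw [hWre, hsval, hqdef, hcosV, hV2]
    linear_combination (-E) * hsinV
  have hEq : 0 < E * q := by rw [← hQq]; exact hQ
  have hq : 0 < q := pos_of_mul_pos' E q hEq hEpos
  have hypos : 0 < y := by
    rcases eq_or_lt_of_le hy0 with h | h
    · exfalso
      rw [hqdef, ← h, hEdef] at hq
      linarith [q_y0 x hx1]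
    · exact h
  have hqup : q ≤ 18/5*y^2 := by
    rw [hqdef, hEdef]
    exact q_upper x y hx0.le hx1 hy0 hy1
  have hW2 : y^3/8 ≤ y * Real.cos y - (1-x) * Real.sin y :=
    W2_lower x y hx0.le hx1 hy0 hy1 hcony
  have hWim2 : W.im^2 = E^2 * (y * Real.cos y - (1-x) * Real.sin y)^2 := by
    rw [hWim]
    rcases abs_choice V with h | h
    · rw [hydef, h]; ring
    · have hV : V = -y := by rw [hydef, h]; ring
      rw [hV, Real.sin_neg, Real.cos_neg]; ring
  have hslb : (1-δ)^2 ≤ s := by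
    have h2 : (1:ℝ) ≤ ‖z+1‖ + ‖z‖ := by
      have h3 := norm_add_le (z+1) (-z)
      have h4 : (z+1) + (-z) = 1 := by ring
      rw [h4] at h3
      simpa using h3
    have h1 : 1 - δ ≤ ‖z‖ := by linarith
    have h3 : (1-δ)^2 ≤ (‖z‖)^2 := pow_le_pow_left₀ hd1.le h1 2
    have h4 : (x-1)^2 + V^2 = (‖z‖)^2 := by
      rw [Complex.sq_norm, Complex.normSq_apply, hzre, ← hVdef]
      ring
    rw [hsval, h4]
    exact slb_aux _ _ _ h3 (by positivity) hE1
  -- final computation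
  rw [hre, him]
  have habs : |-(W.re / s) - 1| = (W.re + s) / s := by
    rw [abs_of_neg ha]
    field_simp
    ring
  rw [habs, div_pow, div_pow, ← mul_div_assoc,
    div_lt_div_iff₀ (by positivity) (by positivity)]
  have hQub : W.re + s ≤ 54/5 * y^2 := by
    rw [hQq]
    calc E * q ≤ 3 * (18/5*y^2) := by
          apply mul_le_mul hE3 hqup hq.le (by norm_num)
      _ = 54/5 * y^2 := by ring
  have hB : y^6/64 ≤ W.im^2 := by
    rw [hWim2]
    have hA : (y^3/8)^2 ≤ (y * Real.cos y - (1-x) * Real.sin y)^2 :=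
      pow_le_pow_left₀ (by positivity) hW2 2
    have he : (y^3/8)^2 = y^6/64 := by ring
    exact imsq_lb E _ _ hE1 (by linarith)
  have himlb : y^6/64 * (1-δ)^2 ≤ W.im^2 * s :=
    mul_le_mul hB hslb (by positivity) (sq_nonneg W.im)
  exact final_aux ((1-δ)^2) s (W.re+s) (W.im^2) y (by positivity) hspos hQ hQub himlb hypos
end

section
/- Fix σ ∈ (0,1) and δ ∈ (0,1), and define Q_{α,β}(w) := ∫₀^σ |1 + w(1−x)|^{−α} x^{β} dx. Let α > 0, β > 0 and 0 ≤ γ < α satisfy β + 1 ≥ max(α, 3α/2 − γ). Then sup_{w ∈ Ω_δ} |1+w|^{γ} Q_{α,β}(w) < ∞. -/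
set_option maxHeartbeats 1000000

open MeasureTheory Complex

/-- `Q_{α,β}(w) = ∫₀^σ |1 + w(1-x)|^{-α} x^β dx`. -/
noncomputable def Qfun (σ α β : ℝ) (w : ℂ) : ℝ :=
  ∫ x in Set.Ioo (0 : ℝ) σ, ‖1 + w * (1 - (x : ℂ))‖ ^ (-α) * x ^ β

/-- Core polynomial inequality. -/
lemma core_poly (a b r : ℝ) (hr0 : 0 ≤ r) (hr1 : r ≤ 1) (hab : a^2 + b^2 = r^2)
    (ha : r^2/2 ≤ a)
    (hP : (a^2-b^2)/2 + (a^3-3*a*b^2)/3 + ((a^2+b^2)^2-8*a^2*b^2)/8 ≤ (31/600)*r^5) :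
    (3/50)*r^3 + (31/600)*r^5 ≤ |b| * (a + a^2 - b^2/3 + a*(a^2-b^2)/2) := by
  set p := |b| with hp
  have hp0 : 0 ≤ p := abs_nonneg b
  have hp2 : p^2 = b^2 := sq_abs b
  have ha0 : 0 ≤ a := le_trans (by positivity) ha
  have har : a ≤ r := by nlinarith [sq_nonneg b]
  have ha1 : a ≤ 1 := le_trans har hr1
  have hb2 : b^2 ≤ r^2 := by nlinarith [sq_nonneg a]
  have hr2 : r^2 ≤ 1 := by nlinarith
  have hr53 : r^5 ≤ r^3 := by
    calc r^5 = r^3 * r^2 := by ring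
      _ ≤ r^3 * 1 := mul_le_mul_of_nonneg_left hr2 (pow_nonneg hr0 3)
      _ = r^3 := by ring
  have hr52 : r^5 ≤ r^2 := by
    calc r^5 = r^2 * r^3 := by ring
      _ ≤ r^2 * 1 := mul_le_mul_of_nonneg_left (by nlinarith [pow_nonneg hr0 3]) (sq_nonneg r)
      _ = r^2 := by ring
  have hr64 : r^6 ≤ r^4 := by
    calc r^6 = r^4 * r^2 := by ring
      _ ≤ r^4 * 1 := mul_le_mul_of_nonneg_left hr2 (pow_nonneg hr0 4)
      _ = r^4 := by ring
  set B := a + a^2 - b^2/3 + a*(a^2-b^2)/2 with hB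
  have hBlb : r^2/6 ≤ B := by
    nlinarith [mul_nonneg ha0 (sub_nonneg.2 ha), mul_nonneg ha0 (sub_nonneg.2 hb2)]
  have hB0 : 0 ≤ B := le_trans (by positivity) hBlb
  have hK : (3/50)*r^3 + (31/600)*r^5 ≤ (67/600)*r^3 := by nlinarith
  have key : ((67/600)*r^3)^2 ≤ (p*B)^2 := by
    rcases le_or_gt (2*a^2) (r^2) with hcase | hcase
    · -- b^2 ≥ r^2/2
      have hb : r^2/2 ≤ p^2 := by nlinarith
      have h1 : p^2*(r^2/6)^2 ≤ p^2*B^2 := by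
        apply mul_le_mul_of_nonneg_left _ (sq_nonneg p)
        exact pow_le_pow_left₀ (by positivity) hBlb 2
      have h2 : ((67/600)*r^3)^2 ≤ p^2*(r^2/6)^2 := by
        have := mul_le_mul_of_nonneg_right hb (by positivity : (0:ℝ) ≤ (r^2/6)^2)
        nlinarith [pow_nonneg hr0 6]
      nlinarith
    · -- a^2 ≥ r^2/2, derive b^2 lower bound from hP
      have hb : (119/1500)*r^2 ≤ p^2 := by
        nlinarith [mul_nonneg (sq_nonneg b) (by linarith : (0:ℝ) ≤ 1 - a),
          mul_nonneg (sq_nonneg b) (by nlinarith : (0:ℝ) ≤ 1 - a^2),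
          pow_nonneg ha0 3, pow_nonneg hr0 4]
      have e1 : (3/4:ℝ) ≤ 1 - r^2/4 := by nlinarith
      have hu0 : 0 ≤ a*(1-r^2/4) := mul_nonneg ha0 (by linarith)
      have e2 : r^2/2 * ((3/4:ℝ)^2) ≤ a^2 * ((1-r^2/4)^2) := by
        apply mul_le_mul (by linarith) (by nlinarith) (by norm_num) (sq_nonneg a)
      have e3 : (9/32)*r^2 ≤ (a*(1-r^2/4))^2 := by nlinarith
      have e4 : (a*(1-r^2/4))^2 + r^4/9 ≤ (a*(1-r^2/4)+r^2/3)^2 := by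
        nlinarith [mul_nonneg hu0 (by positivity : (0:ℝ) ≤ r^2/3)]
      have e5 : (9/32)*r^2 + r^4/9 ≤ (a*(1-r^2/4)+r^2/3)^2 := by linarith
      have hquant : (4489/360000)*r^6 ≤ ((119/1500)*r^2) * (a*(1 - r^2/4) + r^2/3)^2 := by
        have h6 := mul_le_mul_of_nonneg_left e5 (by positivity : (0:ℝ) ≤ (119/1500)*r^2)
        have hexp : (119/1500)*r^2*((9/32)*r^2 + r^4/9) = (1071/48000)*r^4 + (119/13500)*r^6 := by ring
        rw [hexp] at h6
        linarith [pow_nonneg hr0 6]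
      have h0 : (0:ℝ) ≤ a*(1 - r^2/4) + r^2/3 := by positivity
      have hB2 : (a*(1 - r^2/4) + r^2/3)^2 ≤ B^2 := by
        have hba : b^2 ≤ a^2 := by linarith
        have habr : a*r^2 = a^3 + a*b^2 := by rw [← hab]; ring
        have hBlb2 : a*(1 - r^2/4) + r^2/3 ≤ B := by
          linarith [mul_nonneg ha0 (by linarith : (0:ℝ) ≤ 3*a^2 - b^2), habr]
        exact pow_le_pow_left₀ h0 hBlb2 2
      calc ((67/600)*r^3)^2 = (4489/360000)*r^6 := by ring
        _ ≤ ((119/1500)*r^2) * (a*(1 - r^2/4) + r^2/3)^2 := hquant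
        _ ≤ p^2 * (a*(1 - r^2/4) + r^2/3)^2 := mul_le_mul_of_nonneg_right hb (sq_nonneg _)
        _ ≤ p^2 * B^2 := mul_le_mul_of_nonneg_left hB2 (sq_nonneg p)
        _ = (p*B)^2 := by ring
  have hfin : (67/600)*r^3 ≤ p*B := by
    have h67 : (0:ℝ) ≤ (67/600)*r^3 := by positivity
    exact (pow_le_pow_iff_left₀ h67 (mul_nonneg hp0 hB0) two_ne_zero).1 key
  linarith

lemma tail_bound (ζ : ℂ) (h : ‖ζ‖ ≤ 1) (h2 : ‖ζ-1‖ ≤ 1) :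
    ‖1 + (ζ-1)*Complex.exp ζ - (ζ^2/2 + ζ^3/3 + ζ^4/8)‖ ≤
      (31/600) * ‖ζ‖^5 := by
  have hE := Complex.exp_bound h (n := 5) (by norm_num)
  have hsum : ∑ m ∈ Finset.range 5, ζ ^ m / (m.factorial : ℂ)
      = 1 + ζ + ζ^2/2 + ζ^3/6 + ζ^4/24 := by
    simp [Finset.sum_range_succ, Nat.factorial]
  rw [hsum] at hE
  have hEnum : ‖Complex.exp ζ - (1 + ζ + ζ^2/2 + ζ^3/6 + ζ^4/24)‖
      ≤ ‖ζ‖^5 / 100 := by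
    refine le_trans hE ?_
    norm_num [Nat.factorial]
    linarith
  have hid : 1 + (ζ-1)*Complex.exp ζ - (ζ^2/2 + ζ^3/3 + ζ^4/8)
      = (ζ-1) * (Complex.exp ζ - (1 + ζ + ζ^2/2 + ζ^3/6 + ζ^4/24)) + ζ^5/24 := by
    ring
  rw [hid]
  calc ‖(ζ-1) * (Complex.exp ζ - (1 + ζ + ζ^2/2 + ζ^3/6 + ζ^4/24)) + ζ^5/24‖
      ≤ ‖(ζ-1) * (Complex.exp ζ - (1 + ζ + ζ^2/2 + ζ^3/6 + ζ^4/24))‖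
        + ‖ζ^5/24‖ := norm_add_le _ _
    _ = ‖ζ-1‖ * ‖Complex.exp ζ - (1 + ζ + ζ^2/2 + ζ^3/6 + ζ^4/24)‖
        + ‖ζ‖^5/24 := by
        rw [norm_mul, norm_div, norm_pow]
        norm_num
    _ ≤ 1 * (‖ζ‖^5/100) + ‖ζ‖^5/24 :=
        add_le_add (mul_le_mul h2 hEnum (norm_nonneg _) zero_le_one) le_rfl
    _ = (31/600) * ‖ζ‖^5 := by ring

lemma im_lower (ζ : ℂ) (hζ : ‖ζ‖ ≤ 1) (hz : ‖ζ-1‖ ≤ 1)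
    (hres : (1 + (ζ-1)*Complex.exp ζ).re ≤ 0) :
    (3/100) * (‖1 + (ζ-1)*Complex.exp ζ‖) ^ ((3:ℝ)/2)
      ≤ |(1 + (ζ-1)*Complex.exp ζ).im| := by
  set s : ℂ := 1 + (ζ-1)*Complex.exp ζ with hs
  set P : ℂ := ζ^2/2 + ζ^3/3 + ζ^4/8 with hP
  set a : ℝ := ζ.re with ha
  set b : ℝ := ζ.im with hb
  set r : ℝ := ‖ζ‖ with hr
  have hr0 : 0 ≤ r := norm_nonneg ζ
  have hab : a^2 + b^2 = r^2 := by
    rw [hr, Complex.sq_norm, Complex.normSq_apply]; ring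
  have halow : r^2/2 ≤ a := by
    have h1 : ‖ζ-1‖ ^ 2 ≤ 1 := by
      nlinarith [norm_nonneg (ζ-1)]
    rw [Complex.sq_norm, Complex.normSq_apply] at h1
    simp only [Complex.sub_re, Complex.sub_im, Complex.one_re, Complex.one_im] at h1
    nlinarith
  have hPre : P.re = (a^2-b^2)/2 + (a^3-3*a*b^2)/3 + ((a^2+b^2)^2-8*a^2*b^2)/8 := by
    rw [hP]
    simp only [Complex.add_re, Complex.div_re, Complex.div_im]
    simp [pow_succ, Complex.mul_re, Complex.mul_im, Complex.normSq_apply, ← ha, ← hb]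
    ring
  have hPim : P.im = b * (a + a^2 - b^2/3 + a*(a^2-b^2)/2) := by
    rw [hP]
    simp only [Complex.add_im, Complex.div_re, Complex.div_im]
    simp [pow_succ, Complex.mul_re, Complex.mul_im, Complex.normSq_apply, ← ha, ← hb]
    ring
  have hT := tail_bound ζ hζ hz
  rw [← hs, ← hP, ← hr] at hT
  have hTre : |(s - P).re| ≤ (31/600)*r^5 := le_trans (Complex.abs_re_le_norm _) hT
  have hTim : |(s - P).im| ≤ (31/600)*r^5 := le_trans (Complex.abs_im_le_norm _) hT
  have hPre_le : (a^2-b^2)/2 + (a^3-3*a*b^2)/3 + ((a^2+b^2)^2-8*a^2*b^2)/8 ≤ (31/600)*r^5 := by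
    have h1 : (s - P).re = s.re - P.re := by simp
    rw [h1] at hTre
    have := abs_le.1 hTre
    rw [← hPre]
    linarith [this.1]
  have hcore := core_poly a b r hr0 hζ hab halow hPre_le
  -- |s.im| ≥ |P.im| - |s.im - P.im|
  have him : (3/50)*r^3 ≤ |s.im| := by
    have h1 : (s - P).im = s.im - P.im := by simp
    rw [h1] at hTim
    have h2 : |P.im| - |s.im - P.im| ≤ |s.im| := by
      have := abs_sub_abs_le_abs_sub P.im s.im
      rw [abs_sub_comm P.im s.im] at this
      linarith
    have h3 : |b| * (a + a^2 - b^2/3 + a*(a^2-b^2)/2) ≤ |P.im| := by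
      rw [hPim, abs_mul]
      have : (a + a^2 - b^2/3 + a*(a^2-b^2)/2) ≤ |a + a^2 - b^2/3 + a*(a^2-b^2)/2| := le_abs_self _
      exact mul_le_mul_of_nonneg_left this (abs_nonneg b)
    linarith
  -- abs s ≤ (101/100) * r^2
  have habs_s : ‖s‖ ≤ (101/100) * r^2 := by
    have h1 : ‖s‖ ≤ ‖P‖ + (31/600)*r^5 := by
      have := norm_add_le P (s - P)
      simpa using le_trans (by simp : ‖s‖ ≤ ‖P + (s - P)‖) (by linarith [norm_add_le P (s-P)])
    have hPabs : ‖P‖ ≤ r^2/2 + r^3/3 + r^4/8 := by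
      refine le_trans (norm_add_le _ _) ?_
      have h2 : ‖ζ^2/2 + ζ^3/3‖ ≤ r^2/2 + r^3/3 := by
        refine le_trans (norm_add_le _ _) ?_
        rw [norm_div, norm_div, norm_pow, norm_pow]
        norm_num
        rw [← hr]
      have h3 : ‖ζ^4/8‖ = r^4/8 := by
        rw [norm_div, norm_pow]; norm_num; rw [← hr]
      rw [h3]; linarith
    have hone : ∀ n : ℕ, r^n ≤ 1 := fun n => pow_le_one₀ hr0 hζ
    have hr52 : r^5 ≤ r^2 := by
      calc r^5 = r^2 * r^3 := by ring
        _ ≤ r^2 * 1 := mul_le_mul_of_nonneg_left (hone 3) (sq_nonneg r)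
        _ = r^2 := by ring
    have hr32 : r^3 ≤ r^2 := by
      calc r^3 = r^2 * r^1 := by ring
        _ ≤ r^2 * 1 := mul_le_mul_of_nonneg_left (hone 1) (sq_nonneg r)
        _ = r^2 := by ring
    have hr42 : r^4 ≤ r^2 := by
      calc r^4 = r^2 * r^2 := by ring
        _ ≤ r^2 * 1 := mul_le_mul_of_nonneg_left (hone 2) (sq_nonneg r)
        _ = r^2 := by ring
    linarith
  -- conclude
  have hfin : (3/100) * (‖s‖) ^ ((3:ℝ)/2) ≤ (3/50)*r^3 := by
    have h0 : (0:ℝ) ≤ ‖s‖ := norm_nonneg s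
    have h1 : (‖s‖) ^ ((3:ℝ)/2) ≤ ((101/100) * r^2) ^ ((3:ℝ)/2) :=
      Real.rpow_le_rpow h0 habs_s (by norm_num)
    have h2 : ((101/100) * r^2 : ℝ) ^ ((3:ℝ)/2) = (101/100:ℝ) ^ ((3:ℝ)/2) * (r^2) ^ ((3:ℝ)/2) :=
      Real.mul_rpow (by norm_num) (sq_nonneg r)
    have h3 : ((r^2:ℝ)) ^ ((3:ℝ)/2) = r^3 := by
      rw [← Real.rpow_natCast r 2, ← Real.rpow_mul hr0]
      norm_num
    have h4 : (101/100:ℝ) ^ ((3:ℝ)/2) ≤ 2 := by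
      have : (101/100:ℝ) ^ ((3:ℝ)/2) ≤ (101/100:ℝ) ^ ((2:ℝ)) :=
        Real.rpow_le_rpow_of_exponent_le (by norm_num) (by norm_num)
      have h5 : (101/100:ℝ) ^ ((2:ℝ)) = (101/100:ℝ)^(2:ℕ) := by
        rw [show ((2:ℝ)) = ((2:ℕ):ℝ) by norm_num, Real.rpow_natCast]
      nlinarith [this]
    have h5 : (0:ℝ) ≤ r^3 := pow_nonneg hr0 3
    calc (3/100) * (‖s‖) ^ ((3:ℝ)/2) ≤ (3/100) * ((101/100) * r^2) ^ ((3:ℝ)/2) := by linarith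
      _ = (3/100) * ((101/100:ℝ) ^ ((3:ℝ)/2) * r^3) := by rw [h2, h3]
      _ ≤ (3/100) * (2 * r^3) := by
          have := mul_le_mul_of_nonneg_right h4 h5
          nlinarith [Real.rpow_nonneg (by norm_num : (0:ℝ) ≤ (101/100:ℝ)) ((3:ℝ)/2)]
      _ = (3/50)*r^3 := by ring
  linarith

lemma key_lower (σ δ : ℝ) (hσ0 : 0 < σ) (hσ1 : σ < 1) (hδ1 : δ ≤ 1) (w : ℂ)
    (hw : w ∈ OmegaSet δ) :
    ‖1+w‖ ≤ 4 ∧ ∃ x₀ : ℝ, 0 ≤ x₀ ∧ x₀ ≤ ‖1+w‖ ∧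
      ∀ x : ℝ, 0 < x → x < σ →
        (1-σ)*(3/100) * max |x - x₀| ((‖1+w‖) ^ ((3:ℝ)/2))
          ≤ ‖1 + w*(1-(x:ℂ))‖ := by
  obtain ⟨z, ⟨hz1, hz2⟩, rfl⟩ := hw
  rw [Metric.mem_ball, Complex.dist_eq] at hz1 hz2
  set ζ : ℂ := z + 1 with hζdef
  have hwz : z * Complex.exp (z+1) = (ζ - 1) * Complex.exp ζ := by rw [hζdef]; ring_nf
  simp only []
  rw [hwz]
  set s : ℂ := 1 + (ζ - 1) * Complex.exp ζ with hsdef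
  set ε : ℝ := ‖s‖ with hεdef
  have hε0 : 0 ≤ ε := norm_nonneg s
  have hζ1 : ‖ζ‖ ≤ 1 := by
    have : ‖z - (-1)‖ < δ := by simpa using hz1
    have h2 : z - (-1) = ζ := by rw [hζdef]; ring
    rw [h2] at this; linarith
  have hzm1 : ‖ζ - 1‖ ≤ 1 := by
    have : ζ - 1 = z - 0 := by rw [hζdef]; ring
    rw [this]; linarith
  -- ε ≤ 4
  have hε4 : ε ≤ 4 := by
    have h1 : ‖(ζ-1) * Complex.exp ζ‖ ≤ 3 := by
      rw [norm_mul, Complex.norm_exp]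
      have h2 : Real.exp ζ.re ≤ Real.exp 1 :=
        Real.exp_le_exp.2 (le_trans (Complex.re_le_norm ζ) hζ1)
      have h3 : Real.exp 1 ≤ 3 := by
        have := Real.exp_one_lt_d9; linarith
      calc ‖ζ-1‖ * Real.exp ζ.re ≤ 1 * Real.exp ζ.re :=
            mul_le_mul_of_nonneg_right hzm1 (Real.exp_nonneg _)
        _ = Real.exp ζ.re := by ring
        _ ≤ 3 := le_trans h2 h3
    calc ε ≤ ‖(1:ℂ)‖ + ‖(ζ-1) * Complex.exp ζ‖ := norm_add_le _ _
      _ ≤ 1 + 3 := by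
          rw [norm_one]
          linarith
      _ = 4 := by norm_num
  refine ⟨hε4, ?_⟩
  set t : ℝ := s.re with htdef
  have htabs : |t| ≤ ε := Complex.abs_re_le_norm s
  have himabs : |s.im| ≤ ε := Complex.abs_im_le_norm s
  set x₀ : ℝ := if t < 0 then -t/(1-t) else 0 with hx₀def
  have hx₀0 : 0 ≤ x₀ := by
    rw [hx₀def]
    split_ifs with h
    · apply div_nonneg <;> linarith
    · exact le_refl 0
  have hx₀ε : x₀ ≤ ε := by
    rw [hx₀def]
    split_ifs with h
    · have h1 : (1:ℝ) ≤ 1 - t := by linarith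
      have h2 : -t/(1-t) ≤ -t/1 := by
        apply div_le_div_of_nonneg_left (by linarith) (by linarith) h1
      have h3 : -t ≤ |t| := neg_le_abs t
      simp at h2
      linarith
    · exact hε0
  refine ⟨x₀, hx₀0, hx₀ε, ?_⟩
  intro x hx0 hxσ
  set u : ℂ := 1 + ((ζ-1) * Complex.exp ζ) * (1 - (x:ℂ)) with hudef
  have huid : u = ((x:ℝ):ℂ) + (((1-x:ℝ)):ℂ) * s := by
    rw [hudef, hsdef]
    push_cast
    ring
  have hure : u.re = x + (1-x) * t := by
    rw [huid]
    simp [Complex.add_re, Complex.re_ofReal_mul]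
    exact Or.inl rfl
  have huim : u.im = (1-x) * s.im := by
    rw [huid]
    simp [Complex.add_im, Complex.im_ofReal_mul]
  have h1x : (0:ℝ) < 1 - x := by linarith
  have h1σ : (0:ℝ) < 1 - σ := by linarith
  -- Bound 1 : |x - x₀| ≤ abs u
  have hbound1 : |x - x₀| ≤ ‖u‖ := by
    refine le_trans ?_ (Complex.abs_re_le_norm u)
    rw [hure, hx₀def]
    split_ifs with h
    · have hne : (1:ℝ)-t ≠ 0 := ne_of_gt (by linarith)
      have hc : (1-t) * (-t/(1-t)) = -t := mul_div_cancel₀ _ hne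
      have hid : x + (1-x)*t = (1-t) * (x - -t/(1-t)) := by
        rw [mul_sub, hc]
        ring
      rw [hid, abs_mul, abs_of_pos (by linarith : (0:ℝ) < 1 - t)]
      nlinarith [abs_nonneg (x - -t/(1-t))]
    · push_neg at h
      have h2 : 0 < x + (1-x)*t := by nlinarith
      rw [abs_of_pos h2, abs_of_pos (by linarith : (0:ℝ) < x - 0)]
      nlinarith
  -- Bound 2 : (1-σ)*(3/100) * ε^(3/2) ≤ abs u
  have hb2 : (1-σ)*(3/100) * ε ^ ((3:ℝ)/2) ≤ ‖u‖ := by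
    rcases lt_or_ge t 0 with h | h
    · -- use im_lower
      have him := im_lower ζ hζ1 hzm1 (by rw [← hsdef, ← htdef]; linarith)
      rw [← hsdef, ← hεdef] at him
      have h2 : (1-x) * |s.im| ≤ ‖u‖ := by
        rw [← abs_of_pos h1x, ← abs_mul, ← huim]
        exact Complex.abs_im_le_norm u
      have h3 : (1-σ) * |s.im| ≤ (1-x) * |s.im| :=
        mul_le_mul_of_nonneg_right (by linarith) (abs_nonneg _)
      calc (1-σ)*(3/100) * ε ^ ((3:ℝ)/2) = (1-σ) * ((3/100) * ε ^ ((3:ℝ)/2)) := by ring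
        _ ≤ (1-σ) * |s.im| := mul_le_mul_of_nonneg_left him (by linarith)
        _ ≤ (1-x) * |s.im| := h3
        _ ≤ ‖u‖ := h2
    · -- t ≥ 0 : abs u ≥ (1-x) ε ≥ (1-σ) ε ≥ (1-σ)/2 ε^(3/2)
      have hsq : ((1-x)*ε)^2 ≤ (‖u‖)^2 := by
        rw [Complex.sq_norm, Complex.normSq_apply, hure, huim]
        have hε2 : ε^2 = t^2 + s.im^2 := by
          rw [hεdef, Complex.sq_norm, Complex.normSq_apply, htdef]
          ring
        have h2 : ((1-x)*t)^2 ≤ (x + (1-x)*t)^2 := by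
          nlinarith [mul_nonneg (mul_nonneg hx0.le h1x.le) h, sq_nonneg x]
        have hε2' : ((1-x)*ε)^2 = ((1-x)*t)^2 + ((1-x)*s.im)^2 := by
          calc ((1-x)*ε)^2 = (1-x)^2 * ε^2 := by ring
            _ = (1-x)^2 * (t^2 + s.im^2) := by rw [hε2]
            _ = ((1-x)*t)^2 + ((1-x)*s.im)^2 := by ring
        nlinarith [hε2', h2]
      have h3 : (1-x)*ε ≤ ‖u‖ := by
        have := (pow_le_pow_iff_left₀ (by positivity : (0:ℝ) ≤ (1-x)*ε)
          (norm_nonneg u) two_ne_zero).1 hsq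
        exact this
      have h4 : ε ^ ((3:ℝ)/2) ≤ 2 * ε := by
        have e1 : ε ^ ((3:ℝ)/2) = (ε^(3:ℕ)) ^ ((1:ℝ)/2) := by
          rw [← Real.rpow_natCast ε 3, ← Real.rpow_mul hε0]
          norm_num
        have e2 : (ε:ℝ)^(3:ℕ) ≤ 4 * ε^2 := by nlinarith
        have e3 : (ε^(3:ℕ)) ^ ((1:ℝ)/2) ≤ (4*ε^2) ^ ((1:ℝ)/2) :=
          Real.rpow_le_rpow (by positivity) e2 (by norm_num)
        have e4 : ((4:ℝ)*ε^2) ^ ((1:ℝ)/2) = 2*ε := by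
          rw [show (4:ℝ)*ε^2 = (2*ε)^2 by ring, ← Real.sqrt_eq_rpow, Real.sqrt_sq (by positivity)]
        rw [e1]
        rw [e4] at e3
        exact e3
      calc (1-σ)*(3/100) * ε ^ ((3:ℝ)/2) ≤ (1-σ)*(3/100) * (2*ε) := by
            apply mul_le_mul_of_nonneg_left h4 (by positivity)
        _ ≤ (1-x) * ε := by nlinarith
        _ ≤ ‖u‖ := h3
  -- combine
  rcases max_cases |x - x₀| (ε ^ ((3:ℝ)/2)) with ⟨hm, _⟩ | ⟨hm, _⟩
  · rw [hm]
    calc (1-σ)*(3/100) * |x-x₀| ≤ 1 * |x-x₀| := by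
          apply mul_le_mul_of_nonneg_right _ (abs_nonneg _)
          nlinarith
      _ = |x-x₀| := by ring
      _ ≤ ‖u‖ := hbound1
  · rw [hm]
    exact hb2

lemma aux_int (p η ε x₀ : ℝ) (hp : 0 < p) (hη : 0 < η) (hηε : η ≤ 2*ε)
    (S : Set ℝ) (hS : S ⊆ Set.Icc (x₀ - 2*ε) (x₀ + 2*ε)) :
    ∫ x in S, (max |x - x₀| η) ^ (-(p+1)) ≤ 2*η^(-p) + 2*(η^(-p)/p) := by
  set H : ℝ → ℝ := fun u => (max |u| η) ^ (-(p+1)) with hH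
  have hmaxpos : ∀ u : ℝ, 0 < max |u| η := fun u => lt_of_lt_of_le hη (le_max_right _ _)
  have hHcont : Continuous H := by
    apply Continuous.rpow_const
    · exact (continuous_abs.max continuous_const)
    · intro u
      exact Or.inl (ne_of_gt (hmaxpos u))
  have hHpos : ∀ u : ℝ, 0 ≤ H u := fun u => Real.rpow_nonneg (hmaxpos u).le _
  have hε0 : 0 ≤ ε := by linarith
  have step1 : ∫ x in S, H (x - x₀) ≤ ∫ x in Set.Icc (x₀-2*ε) (x₀+2*ε), H (x - x₀) := by
    apply setIntegral_mono_set
    · exact ((hHcont.comp (continuous_id.sub continuous_const)).integrableOn_Icc)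
    · exact Filter.Eventually.of_forall (fun x => hHpos _)
    · exact Filter.Eventually.of_forall hS
  have step2 : ∫ x in Set.Icc (x₀-2*ε) (x₀+2*ε), H (x - x₀)
      = ∫ x in (x₀-2*ε)..(x₀+2*ε), H (x - x₀) := by
    rw [intervalIntegral.integral_of_le (by linarith), integral_Icc_eq_integral_Ioc]
  have step3 : ∫ x in (x₀-2*ε)..(x₀+2*ε), H (x - x₀) = ∫ u in (-(2*ε))..(2*ε), H u := by
    rw [intervalIntegral.integral_comp_sub_right H x₀]
    congr 1 <;> ring
  have hint : ∀ a b : ℝ, IntervalIntegrable H volume a b := fun a b => hHcont.intervalIntegrable a b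
  have hmid : ∫ u in (-η)..η, H u = 2 * η^(-p) := by
    have hcongr : Set.EqOn H (fun _ => η ^ (-(p+1))) (Set.uIcc (-η) η) := by
      intro u hu
      rw [Set.uIcc_of_le (by linarith)] at hu
      have : |u| ≤ η := abs_le.2 ⟨hu.1, hu.2⟩
      simp only [hH]
      rw [max_eq_right this]
    rw [intervalIntegral.integral_congr hcongr, intervalIntegral.integral_const, smul_eq_mul]
    have hh : η ^ (-p) = η * η^(-(p+1)) := by
      rw [show -p = 1 + -(p+1) by ring, Real.rpow_add hη, Real.rpow_one]
    rw [hh]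
    ring
  have hright : ∫ u in η..(2*ε), H u ≤ η^(-p)/p := by
    have hcongr : Set.EqOn H (fun u => u ^ (-(p+1))) (Set.uIcc η (2*ε)) := by
      intro u hu
      rw [Set.uIcc_of_le hηε] at hu
      have h1 : (0:ℝ) < u := lt_of_lt_of_le hη hu.1
      simp only [hH]
      rw [abs_of_pos h1, max_eq_left hu.1]
    rw [intervalIntegral.integral_congr hcongr]
    rw [integral_rpow (Or.inr ⟨by intro hc; exact hp.ne' (by linarith), by
      rw [Set.uIcc_of_le hηε]; intro hc; linarith [hc.1]⟩)]
    have he : -(p+1) + 1 = -p := by ring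
    rw [he]
    have h2ε : (0:ℝ) ≤ (2*ε) ^ (-p) := Real.rpow_nonneg (by linarith) _
    have heq : ((2*ε)^(-p) - η^(-p))/(-p) = (η^(-p) - (2*ε)^(-p))/p := by
      rw [div_neg]
      ring
    rw [heq]
    exact (div_le_div_iff_of_pos_right hp).2 (by linarith)
  have hleft : ∫ u in (-(2*ε))..(-η), H u ≤ η^(-p)/p := by
    have : ∫ u in (-(2*ε))..(-η), H u = ∫ u in η..(2*ε), H u := by
      rw [← intervalIntegral.integral_comp_neg H]
      apply intervalIntegral.integral_congr
      intro u _
      simp only [hH, abs_neg]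
    rw [this]
    exact hright
  have hsplit : ∫ u in (-(2*ε))..(2*ε), H u
      = (∫ u in (-(2*ε))..(-η), H u) + (∫ u in (-η)..η, H u) + (∫ u in η..(2*ε), H u) := by
    rw [intervalIntegral.integral_add_adjacent_intervals (hint _ _) (hint _ _),
      intervalIntegral.integral_add_adjacent_intervals (hint _ _) (hint _ _)]
  have : ∫ x in S, H (x - x₀) ≤ 2*η^(-p) + 2*(η^(-p)/p) := by
    rw [step2, step3] at step1
    rw [hsplit] at step1
    rw [hmid] at step1
    linarith
  simpa only [hH] using this

/-- Lemma 12: if `β > 0`, `0 ≤ γ < α` and `β + 1 ≥ max(α, 3α/2 - γ)`, then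
`|1+w|^γ Q_{α,β}(w)` is bounded on `Ω_δ`. -/
theorem Q_bounded_on_omega (σ δ : ℝ) (hσ0 : 0 < σ) (hσ1 : σ < 1) (hδ0 : 0 < δ) (hδ1 : δ < 1)
    (α β γ : ℝ) (hα : 0 < α) (hβ : 0 < β) (hγ0 : 0 ≤ γ) (hγα : γ < α)
    (h1 : α ≤ β + 1) (h2 : 3 * α / 2 - γ ≤ β + 1) :
    ∃ M : ℝ, ∀ w ∈ OmegaSet δ, ‖1 + w‖ ^ γ * Qfun σ α β w ≤ M := by
  set c : ℝ := (1-σ)*(3/100) with hcdef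
  have hc0 : 0 < c := by rw [hcdef]; nlinarith
  set e₁ : ℝ := β + γ - α with he₁def
  have he₁ : -1 < e₁ := by rw [he₁def]; linarith
  have he₁1 : 0 < e₁ + 1 := by linarith
  set MA : ℝ := c^(-α) * 2^(α-γ) * (σ^(e₁+1)/(e₁+1)) with hMAdef
  set MB : ℝ := c^(-α) * ((2+2/α) * 2^(β+1) * 4^(γ+β+1)) with hMBdef
  refine ⟨max (MA + MB) ((‖1 + (-1:ℂ)‖)^γ * Qfun σ α β (-1)), ?_⟩
  intro w hw
  by_cases hw1 : w = -1
  · rw [hw1]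
    exact le_max_right _ _
  refine le_trans ?_ (le_max_left _ _)
  -- setup
  have hw0 : (1 + w) ≠ 0 := fun h => hw1 (by linear_combination h)
  set ε : ℝ := ‖1+w‖ with hεdef
  have hεpos : 0 < ε := norm_pos_iff.mpr hw0
  obtain ⟨hε4, x₀, hx₀0, hx₀ε, hlow⟩ := key_lower σ δ hσ0 hσ1 hδ1.le w hw
  rw [← hεdef] at hε4 hx₀ε hlow
  set η : ℝ := ε ^ ((3:ℝ)/2) with hηdef
  have hη0 : 0 < η := Real.rpow_pos_of_pos hεpos _
  have hη2ε : η ≤ 2*ε := by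
    rw [hηdef, show (3:ℝ)/2 = 1 + (1:ℝ)/2 by norm_num, Real.rpow_add hεpos, Real.rpow_one]
    have h12 : ε ^ ((1:ℝ)/2) ≤ 2 := by
      have e1 : ((4:ℝ)) ^ ((1:ℝ)/2) = 2 := by
        rw [show (4:ℝ) = (2:ℝ)^(2:ℕ) by norm_num, ← Real.rpow_natCast (2:ℝ) 2,
          ← Real.rpow_mul (by norm_num)]
        norm_num
      calc ε ^ ((1:ℝ)/2) ≤ (4:ℝ) ^ ((1:ℝ)/2) := Real.rpow_le_rpow hεpos.le hε4 (by norm_num)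
        _ = 2 := e1
    nlinarith [hεpos]
  have hmaxpos : ∀ x : ℝ, 0 < max |x - x₀| η := fun x => lt_of_lt_of_le hη0 (le_max_right _ _)
  set S : Set ℝ := Set.Ioo (0:ℝ) σ with hSdef
  set S₁ : Set ℝ := S ∩ Set.Iic (2*ε) with hS₁def
  set S₂ : Set ℝ := S ∩ Set.Ioi (2*ε) with hS₂def
  set f : ℝ → ℝ := fun x => (‖1 + w * (1 - (x : ℂ))‖) ^ (-α) * x ^ β with hfdef
  set g : ℝ → ℝ := fun x => c^(-α) * ((max |x - x₀| η)^(-α) * x ^ β) with hgdef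
  have hfg : ∀ x ∈ S, f x ≤ g x := by
    intro x hx
    obtain ⟨hx0, hxσ⟩ := hx
    have h1 : c * max |x - x₀| η ≤ ‖1 + w*(1-(x:ℂ))‖ := hlow x hx0 hxσ
    have h2 : (‖1 + w*(1-(x:ℂ))‖)^(-α) ≤ (c * max |x - x₀| η)^(-α) :=
      Real.rpow_le_rpow_of_nonpos (by positivity) h1 (by linarith)
    have h3 : (c * max |x - x₀| η)^(-α) = c^(-α) * (max |x - x₀| η)^(-α) :=
      Real.mul_rpow hc0.le (hmaxpos x).le
    calc f x ≤ (c * max |x - x₀| η)^(-α) * x ^ β :=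
          mul_le_mul_of_nonneg_right h2 (Real.rpow_nonneg hx0.le β)
      _ = g x := by rw [h3, hgdef]; ring
  -- continuity and integrability
  have hxβcont : Continuous (fun x : ℝ => x ^ β) :=
    continuous_id.rpow_const (fun x => Or.inr hβ.le)
  have hgcont : Continuous g := by
    apply Continuous.mul continuous_const
    apply Continuous.mul _ hxβcont
    apply Continuous.rpow_const ((continuous_id.sub continuous_const).abs.max continuous_const)
    exact fun x => Or.inl (ne_of_gt (hmaxpos x))
  have hg_int : IntegrableOn g S := (hgcont.integrableOn_Icc (a := 0) (b := σ)).mono_set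
    Set.Ioo_subset_Icc_self
  have hf_cont : ContinuousOn f S := by
    apply ContinuousOn.mul _ hxβcont.continuousOn
    apply ContinuousOn.rpow_const
    · apply Continuous.continuousOn
      exact continuous_norm.comp (by continuity)
    · intro x hx
      left
      have := hlow x hx.1 hx.2
      have hpos : 0 < ‖1 + w*(1-(x:ℂ))‖ :=
        lt_of_lt_of_le (by positivity) this
      exact ne_of_gt hpos
  have hf_nonneg : ∀ x ∈ S, 0 ≤ f x := by
    intro x hx
    exact mul_nonneg (Real.rpow_nonneg (norm_nonneg _) _) (Real.rpow_nonneg hx.1.le β)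
  have hf_int : IntegrableOn f S := by
    apply Integrable.mono' hg_int (hf_cont.aestronglyMeasurable measurableSet_Ioo)
    filter_upwards [ae_restrict_mem measurableSet_Ioo] with x hx
    rw [Real.norm_eq_abs, _root_.abs_of_nonneg (hf_nonneg x hx)]
    exact hfg x hx
  have hQf : Qfun σ α β w = ∫ x in S, f x := rfl
  have hQg : ∫ x in S, f x ≤ ∫ x in S, g x :=
    setIntegral_mono_on hf_int hg_int measurableSet_Ioo hfg
  -- splitting
  have hS₁sub : S₁ ⊆ S := Set.inter_subset_left
  have hS₂sub : S₂ ⊆ S := Set.inter_subset_left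
  have hunion : S = S₁ ∪ S₂ := by
    rw [hS₁def, hS₂def, ← Set.inter_union_distrib_left, Set.Iic_union_Ioi, Set.inter_univ]
  have hdisj : Disjoint S₁ S₂ :=
    Disjoint.mono Set.inter_subset_right Set.inter_subset_right
      (Set.Iic_disjoint_Ioi le_rfl)
  have hS₂meas : MeasurableSet S₂ := measurableSet_Ioo.inter measurableSet_Ioi
  have hS₁meas : MeasurableSet S₁ := measurableSet_Ioo.inter measurableSet_Iic
  have hsplitg : ∫ x in S, g x = (∫ x in S₁, g x) + (∫ x in S₂, g x) := by
    rw [hunion]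
    exact setIntegral_union hdisj hS₂meas (hg_int.mono_set hS₁sub) (hg_int.mono_set hS₂sub)
  -- Part B : S₁
  have hεγ0 : (0:ℝ) ≤ ε ^ γ := Real.rpow_nonneg hεpos.le γ
  have hPartB : ε^γ * ∫ x in S₁, g x ≤ MB := by
    set K : ℝ := c^(-α) * ((2*ε)^β * (2*ε)) with hKdef
    have hK0 : 0 ≤ K := by positivity
    have hBpoint : ∀ x ∈ S₁, g x ≤ K * (max |x - x₀| η)^(-(α+1)) := by
      intro x hx
      obtain ⟨⟨hx0, hxσ⟩, hx2ε⟩ := hx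
      have hmax2ε : max |x - x₀| η ≤ 2*ε := by
        apply max_le _ hη2ε
        rw [abs_le]
        constructor <;> [linarith; linarith [Set.mem_Iic.1 hx2ε]]
      have hsp : (max |x - x₀| η)^(-α) = (max |x - x₀| η)^(-(α+1)) * (max |x - x₀| η) := by
        rw [show -α = -(α+1) + 1 by ring, Real.rpow_add (hmaxpos x), Real.rpow_one]
      have h5 : (max |x - x₀| η)^(-α) ≤ (max |x - x₀| η)^(-(α+1)) * (2*ε) := by
        rw [hsp]
        exact mul_le_mul_of_nonneg_left hmax2ε (Real.rpow_nonneg (hmaxpos x).le _)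
      have h6 : x ^ β ≤ (2*ε)^β := Real.rpow_le_rpow hx0.le (Set.mem_Iic.1 hx2ε) hβ.le
      have h7 : (max |x - x₀| η)^(-α) * x^β ≤ ((max |x - x₀| η)^(-(α+1)) * (2*ε)) * (2*ε)^β := by
        apply mul_le_mul h5 h6 (Real.rpow_nonneg hx0.le β)
        positivity
      calc g x = c^(-α) * ((max |x - x₀| η)^(-α) * x ^ β) := rfl
        _ ≤ c^(-α) * (((max |x - x₀| η)^(-(α+1)) * (2*ε)) * (2*ε)^β) :=
            mul_le_mul_of_nonneg_left h7 (by positivity)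
        _ = K * (max |x - x₀| η)^(-(α+1)) := by rw [hKdef]; ring
    have hS₁Icc : S₁ ⊆ Set.Icc (x₀ - 2*ε) (x₀ + 2*ε) := by
      intro x hx
      obtain ⟨⟨hx0, hxσ⟩, hx2ε⟩ := hx
      have := Set.mem_Iic.1 hx2ε
      constructor <;> [linarith; linarith]
    have hHcont : Continuous (fun x : ℝ => (max |x - x₀| η)^(-(α+1))) := by
      apply Continuous.rpow_const ((continuous_id.sub continuous_const).abs.max continuous_const)
      exact fun x => Or.inl (ne_of_gt (hmaxpos x))
    have hHInt : IntegrableOn (fun x : ℝ => K * (max |x - x₀| η)^(-(α+1))) S₁ :=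
      ((hHcont.integrableOn_Icc (a := x₀-2*ε) (b := x₀+2*ε)).mono_set hS₁Icc).const_mul K
    have hB1 : ∫ x in S₁, g x ≤ ∫ x in S₁, K * (max |x - x₀| η)^(-(α+1)) :=
      setIntegral_mono_on (hg_int.mono_set hS₁sub) hHInt hS₁meas hBpoint
    have hB2 : ∫ x in S₁, K * (max |x - x₀| η)^(-(α+1))
        = K * ∫ x in S₁, (max |x - x₀| η)^(-(α+1)) := integral_const_mul K _
    have hB3 := aux_int α η ε x₀ hα hη0 hη2ε S₁ hS₁Icc
    have hB4 : ∫ x in S₁, g x ≤ K * (2*η^(-α) + 2*(η^(-α)/α)) := by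
      rw [hB2] at hB1
      have hInt0 : (0:ℝ) ≤ K := hK0
      calc ∫ x in S₁, g x ≤ K * ∫ x in S₁, (max |x - x₀| η)^(-(α+1)) := hB1
        _ ≤ K * (2*η^(-α) + 2*(η^(-α)/α)) := mul_le_mul_of_nonneg_left hB3 hK0
    -- algebra
    have halg : ε^γ * (K * (2*η^(-α) + 2*(η^(-α)/α)))
        = c^(-α) * ((2+2/α) * 2^(β+1)) * (ε^γ * (ε^β * (ε * η^(-α)))) := by
      rw [hKdef]
      rw [Real.mul_rpow (by norm_num) hεpos.le, Real.rpow_add (by norm_num : (0:ℝ) < 2) β,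
        Real.rpow_one]
      ring
    have hεpow : ε^γ * (ε^β * (ε * η^(-α))) = ε^(γ+β+1+(3/2)*(-α)) := by
      rw [hηdef, ← Real.rpow_mul hεpos.le]
      rw [show γ+β+1+(3/2)*(-α) = γ+(β+(1+(3:ℝ)/2*(-α))) by ring]
      rw [Real.rpow_add hεpos, Real.rpow_add hεpos, Real.rpow_add hεpos, Real.rpow_one]
    have he₃0 : 0 ≤ γ+β+1+(3/2)*(-α) := by linarith
    have hεbound : ε^(γ+β+1+(3/2)*(-α)) ≤ 4^(γ+β+1) := by
      calc ε^(γ+β+1+(3/2)*(-α)) ≤ (4:ℝ)^(γ+β+1+(3/2)*(-α)) :=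
            Real.rpow_le_rpow hεpos.le hε4 he₃0
        _ ≤ (4:ℝ)^(γ+β+1) := Real.rpow_le_rpow_of_exponent_le (by norm_num) (by nlinarith)
    calc ε^γ * ∫ x in S₁, g x ≤ ε^γ * (K * (2*η^(-α) + 2*(η^(-α)/α))) :=
          mul_le_mul_of_nonneg_left hB4 hεγ0
      _ = c^(-α) * ((2+2/α) * 2^(β+1)) * (ε^γ * (ε^β * (ε * η^(-α)))) := halg
      _ = c^(-α) * ((2+2/α) * 2^(β+1)) * ε^(γ+β+1+(3/2)*(-α)) := by rw [hεpow]
      _ ≤ c^(-α) * ((2+2/α) * 2^(β+1)) * 4^(γ+β+1) := by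
          apply mul_le_mul_of_nonneg_left hεbound
          positivity
      _ = MB := by rw [hMBdef]; ring
  -- Part A : S₂
  have hPartA : ε^γ * ∫ x in S₂, g x ≤ MA := by
    set KA : ℝ := c^(-α) * 2^(α-γ) with hKAdef
    have hApoint : ∀ x ∈ S₂, ε^γ * g x ≤ KA * x^e₁ := by
      intro x hx
      obtain ⟨⟨hx0, hxσ⟩, hx2ε⟩ := hx
      have hx2ε' : 2*ε < x := Set.mem_Ioi.1 hx2ε
      have hhalf : 0 < x/2 := by linarith
      have hmaxge : x/2 ≤ max |x - x₀| η := by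
        refine le_trans ?_ (le_max_left _ _)
        rw [_root_.abs_of_nonneg (by linarith : (0:ℝ) ≤ x - x₀)]
        linarith
      have hA1 : (max |x - x₀| η)^(-α) ≤ (x/2)^(-α) :=
        Real.rpow_le_rpow_of_nonpos hhalf hmaxge (by linarith)
      have hA2 : ε^γ ≤ (x/2)^γ := Real.rpow_le_rpow hεpos.le (by linarith) hγ0
      have hA3 : ε^γ * g x ≤ (x/2)^γ * (c^(-α) * ((x/2)^(-α) * x^β)) := by
        have e1 : ε^γ * g x = (ε^γ) * (c^(-α) * ((max |x - x₀| η)^(-α) * x ^ β)) := rfl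
        rw [e1]
        apply mul_le_mul hA2 _ (by positivity) (by positivity)
        apply mul_le_mul_of_nonneg_left _ (by positivity)
        exact mul_le_mul_of_nonneg_right hA1 (Real.rpow_nonneg hx0.le β)
      have hA4 : (x/2)^γ * (c^(-α) * ((x/2)^(-α) * x^β)) = KA * x^e₁ := by
        have e2 : (x/2)^γ * (x/2)^(-α) = (x/2)^(γ-α) := by
          rw [show γ - α = γ + (-α) by ring, Real.rpow_add hhalf]
        have e3 : (x/2:ℝ)^(γ-α) = x^(γ-α) * 2^(α-γ) := by
          rw [Real.div_rpow hx0.le (by norm_num : (0:ℝ) ≤ 2)]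
          rw [show α - γ = -(γ-α) by ring, Real.rpow_neg (by norm_num : (0:ℝ) ≤ 2)]
          ring
        have e4 : x^(γ-α) * x^β = x^e₁ := by
          rw [← Real.rpow_add hx0, he₁def]
          ring_nf
        calc (x/2)^γ * (c^(-α) * ((x/2)^(-α) * x^β))
            = c^(-α) * (((x/2)^γ * (x/2)^(-α)) * x^β) := by ring
          _ = c^(-α) * ((x^(γ-α) * 2^(α-γ)) * x^β) := by rw [e2, e3]
          _ = KA * (x^(γ-α) * x^β) := by rw [hKAdef]; ring
          _ = KA * x^e₁ := by rw [e4]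
      linarith [hA3, hA4.le, hA4.ge]
    have hrpow_int : IntegrableOn (fun x : ℝ => KA * x^e₁) S := by
      have base : IntegrableOn (fun x : ℝ => x^e₁) S :=
        ((intervalIntegral.intervalIntegrable_rpow' (a := 0) (b := σ) he₁).1).mono_set Set.Ioo_subset_Ioc_self
      exact base.const_mul KA
    have hA5 : ∫ x in S₂, ε^γ * g x ≤ ∫ x in S₂, KA * x^e₁ :=
      setIntegral_mono_on ((hg_int.mono_set hS₂sub).const_mul _) (hrpow_int.mono_set hS₂sub)
        hS₂meas hApoint
    have hA6 : ∫ x in S₂, KA * x^e₁ ≤ ∫ x in S, KA * x^e₁ := by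
      apply setIntegral_mono_set hrpow_int
      · filter_upwards [ae_restrict_mem measurableSet_Ioo] with x hx
        have : (0:ℝ) < x := hx.1
        positivity
      · exact Filter.Eventually.of_forall hS₂sub
    have hA7 : ∫ x in S, KA * x^e₁ = MA := by
      rw [integral_const_mul]
      have : ∫ x in S, x^e₁ = σ^(e₁+1)/(e₁+1) := by
        rw [hSdef, ← integral_Ioc_eq_integral_Ioo, ← intervalIntegral.integral_of_le hσ0.le,
          integral_rpow (Or.inl he₁)]
        rw [Real.zero_rpow (by linarith : e₁+1 ≠ 0)]
        ring
      rw [this, hMAdef, hKAdef]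
    calc ε^γ * ∫ x in S₂, g x = ∫ x in S₂, ε^γ * g x := (integral_const_mul _ _).symm
      _ ≤ ∫ x in S₂, KA * x^e₁ := hA5
      _ ≤ ∫ x in S, KA * x^e₁ := hA6
      _ = MA := hA7
  -- conclude
  calc ε^γ * Qfun σ α β w ≤ ε^γ * ∫ x in S, g x := by
        rw [hQf]
        exact mul_le_mul_of_nonneg_left hQg hεγ0
    _ = (ε^γ * ∫ x in S₁, g x) + (ε^γ * ∫ x in S₂, g x) := by rw [hsplitg, mul_add]
    _ ≤ MB + MA := add_le_add hPartB hPartA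
    _ = MA + MB := by ring
end

section
/- For every integer k ≥ 1 there exist polynomials P_{k,1}, …, P_{k,k} in k variables with rational coefficients such that for every open set U ⊆ ℂ, every analytic function h : U → ℂ, and every function g analytic on an open set containing h(U), one has for all z ∈ U: (g ∘ h)^{(k)}(z) = Σ_{j=1}^{k} (h′(z))^{max(2j−k, 0)} · g^{(j)}(h(z)) · P_{k,j}(h′(z), h″(z), …, h^{(k)}(z)). -/
open Complex

open MvPolynomial

lemma hasDerivAt_mvpoly {n : ℕ} (P : MvPolynomial (Fin n) ℚ) (f : Fin n → ℂ → ℂ)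
    (f' : Fin n → ℂ) (x : ℂ) (hf : ∀ i, HasDerivAt (f i) (f' i) x) :
    HasDerivAt (fun t => MvPolynomial.aeval (fun i => f i t) P)
      (∑ i, MvPolynomial.aeval (fun i => f i x) (MvPolynomial.pderiv i P) * f' i) x := by
  induction P using MvPolynomial.induction_on with
  | C a => simpa using hasDerivAt_const x ((algebraMap ℚ ℂ) a)
  | add p q hp hq =>
      have := hp.add hq
      simpa [Finset.sum_add_distrib, add_mul, Pi.add_def] using this
  | mul_X p i hp =>
      have H := hp.mul (hf i)
      have : (∑ j, (aeval fun i => f i x) (pderiv j (p * X i)) * f' j)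
          = (∑ j, (aeval fun i => f i x) (pderiv j p) * f' j) * f i x
            + (aeval fun i => f i x) p * f' i := by
        classical
        simp only [pderiv_mul, map_add, map_mul, aeval_X, add_mul, Finset.sum_add_distrib,
          Finset.sum_mul]
        congr 1
        · exact Finset.sum_congr rfl fun j _ => by ring
        · rw [Fintype.sum_eq_single i]
          · simp
          · intro j hj
            simp [pderiv_X, Pi.single_eq_of_ne (Ne.symm hj)]
      rw [this]
      simpa [map_mul, aeval_X, Pi.mul_def] using H

lemma analyticOnNhd_iteratedDeriv {U : Set ℂ} {h : ℂ → ℂ}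
    (hh : AnalyticOnNhd ℂ h U) (n : ℕ) : AnalyticOnNhd ℂ (iteratedDeriv n h) U := by
  induction n with
  | zero => simpa using hh
  | succ n ih => rw [iteratedDeriv_succ]; exact ih.deriv

lemma hasDerivAt_iteratedDeriv {U : Set ℂ} {h : ℂ → ℂ}
    (hh : AnalyticOnNhd ℂ h U) (n : ℕ) {z : ℂ} (hz : z ∈ U) :
    HasDerivAt (iteratedDeriv n h) (iteratedDeriv (n + 1) h z) z := by
  rw [iteratedDeriv_succ]
  exact ((analyticOnNhd_iteratedDeriv hh n z hz).differentiableAt).hasDerivAt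

lemma sum_Icc_one_eq (m : ℕ) (f : ℕ → ℂ) :
    ∑ j ∈ Finset.Icc 1 m, f j = ∑ i ∈ Finset.range m, f (i + 1) := by
  rw [← Finset.Ico_add_one_right_eq_Icc, Finset.sum_Ico_eq_sum_range]
  exact Finset.sum_congr (by norm_num) fun i _ => by rw [Nat.add_comm]

/-- Lemma (Faà di Bruno form): for every `k ≥ 1` there are polynomials
`P_{k,1}, …, P_{k,k}` in `k` variables with rational coefficients such that
`(g ∘ h)^{(k)}(z) = Σ_{j=1}^k (h'(z))^{max(2j-k,0)} g^{(j)}(h(z)) P_{k,j}(h'(z),…,h^{(k)}(z))`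
for all analytic `g`, `h`. -/
theorem faa_di_bruno_structure (k : ℕ) (hk : 1 ≤ k) :
    ∃ P : ℕ → MvPolynomial (Fin k) ℚ,
      ∀ (U V : Set ℂ), IsOpen U → IsOpen V →
        ∀ (h g : ℂ → ℂ), AnalyticOnNhd ℂ h U → AnalyticOnNhd ℂ g V →
          (∀ z ∈ U, h z ∈ V) →
          ∀ z ∈ U,
            iteratedDeriv k (g ∘ h) z =
              ∑ j ∈ Finset.Icc 1 k,
                (deriv h z) ^ (2 * j - k) * iteratedDeriv j g (h z) *
                  MvPolynomial.aeval (fun i : Fin k => iteratedDeriv ((i : ℕ) + 1) h z)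
                    (P j) := by
  induction k, hk using Nat.le_induction with
  | base =>
      refine ⟨fun _ => 1, ?_⟩
      intro U V hU hV h g hh hg hmap z hz
      have hc : HasDerivAt (g ∘ h) (deriv g (h z) * deriv h z) z :=
        ((hg (h z) (hmap z hz)).differentiableAt.hasDerivAt).comp z
          ((hh z hz).differentiableAt.hasDerivAt)
      simp [iteratedDeriv_one, hc.deriv, Finset.Icc_self]
      ring
  | succ k hk1 IH =>
      obtain ⟨P, hP⟩ := IH
      classical
      set Q : ℕ → MvPolynomial (Fin k) ℚ :=
        fun j => if j ∈ Finset.Icc 1 k then P j else 0 with hQdef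
      -- the new polynomials
      refine ⟨fun j =>
        (2 * j - k) • (X (⟨1, by omega⟩ : Fin (k+1)) * rename Fin.castSucc (Q j))
        + X (0 : Fin (k+1)) ^ ((2 * j - k) - (2 * j - (k+1)))
            * ∑ i : Fin k, X i.succ * rename Fin.castSucc (pderiv i (Q j))
        + X (0 : Fin (k+1)) ^ ((2 * (j-1) - k + 1) - (2 * j - (k+1)))
            * rename Fin.castSucc (Q (j-1)), ?_⟩
      intro U V hU hV h g hh hg hmap z hz
      -- notation
      set v : Fin k → ℂ := fun i => iteratedDeriv ((i : ℕ) + 1) h z with hv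
      set x : ℂ := deriv h z with hx
      set y2 : ℂ := iteratedDeriv 2 h z with hy2
      set G : ℕ → ℂ := fun j => iteratedDeriv j g (h z) with hG
      set a : ℕ → ℂ := fun j => MvPolynomial.aeval v (Q j) with ha
      set s : ℕ → ℂ := fun j =>
        ∑ i : Fin k, MvPolynomial.aeval v (pderiv i (Q j)) * iteratedDeriv ((i : ℕ) + 1 + 1) h z
        with hs
      -- the formula at level k, with Q, for every w ∈ U
      have hQform : ∀ w ∈ U, iteratedDeriv k (g ∘ h) w =
          ∑ j ∈ Finset.Icc 1 k,
            (deriv h w) ^ (2 * j - k) * iteratedDeriv j g (h w) *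
              MvPolynomial.aeval (fun i : Fin k => iteratedDeriv ((i : ℕ) + 1) h w) (Q j) := by
        intro w hw
        rw [hP U V hU hV h g hh hg hmap w hw]
        exact Finset.sum_congr rfl fun j hj => by simp [hQdef, Finset.mem_Icc.mp hj]
      -- derivative of each summand
      have hd2 : HasDerivAt (deriv h) y2 z := by
        have := hasDerivAt_iteratedDeriv hh 1 hz
        rwa [iteratedDeriv_one] at this
      have hterm : ∀ j, HasDerivAt
          (fun w => (deriv h w) ^ (2 * j - k) * iteratedDeriv j g (h w) *
              MvPolynomial.aeval (fun i : Fin k => iteratedDeriv ((i : ℕ) + 1) h w) (Q j))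
          ((((2*j-k : ℕ) : ℂ) * x ^ (2*j-k-1) * y2 * G j
              + x ^ (2*j-k) * (G (j+1) * x)) * a j
            + x ^ (2*j-k) * G j * s j) z := by
        intro j
        have h1 : HasDerivAt (fun w => (deriv h w) ^ (2*j-k))
            (((2*j-k : ℕ) : ℂ) * x ^ (2*j-k-1) * y2) z := hd2.pow _
        have h2 : HasDerivAt (fun w => iteratedDeriv j g (h w)) (G (j+1) * x) z := by
          exact (hasDerivAt_iteratedDeriv hg j (hmap z hz)).comp z
            ((hh z hz).differentiableAt.hasDerivAt)
        have h3 : HasDerivAt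
            (fun w => MvPolynomial.aeval (fun i : Fin k => iteratedDeriv ((i : ℕ) + 1) h w) (Q j))
            (s j) z :=
          hasDerivAt_mvpoly (Q j) (fun i w => iteratedDeriv ((i : ℕ) + 1) h w)
            (fun i => iteratedDeriv ((i : ℕ) + 1 + 1) h z) z
            (fun i => hasDerivAt_iteratedDeriv hh ((i : ℕ) + 1) hz)
        exact (h1.mul h2).mul h3
      have hsum : HasDerivAt (iteratedDeriv k (g ∘ h))
          (∑ j ∈ Finset.Icc 1 k,
            ((((2*j-k : ℕ) : ℂ) * x ^ (2*j-k-1) * y2 * G j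
              + x ^ (2*j-k) * (G (j+1) * x)) * a j
            + x ^ (2*j-k) * G j * s j)) z := by
        refine HasDerivAt.congr_of_eventuallyEq
          (HasDerivAt.fun_sum fun j _ => hterm j) ?_
        filter_upwards [hU.mem_nhds hz] with w hw using hQform w hw
      have hLHS : iteratedDeriv (k+1) (g ∘ h) z =
          ∑ j ∈ Finset.Icc 1 k,
            ((((2*j-k : ℕ) : ℂ) * x ^ (2*j-k-1) * y2 * G j
              + x ^ (2*j-k) * (G (j+1) * x)) * a j
            + x ^ (2*j-k) * G j * s j) := by
        rw [iteratedDeriv_succ]; exact hsum.deriv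
      rw [hLHS]
      -- evaluate the new polynomials
      have hvc : ∀ p : MvPolynomial (Fin k) ℚ,
          (MvPolynomial.aeval (fun i : Fin (k+1) => iteratedDeriv ((i : ℕ) + 1) h z))
            (rename Fin.castSucc p) = MvPolynomial.aeval v p := by
        intro p
        rw [aeval_rename]
        congr 1
      have haeval : ∀ j : ℕ,
          (MvPolynomial.aeval (fun i : Fin (k+1) => iteratedDeriv ((i : ℕ) + 1) h z))
            ((2 * j - k) • (X (⟨1, by omega⟩ : Fin (k+1)) * rename Fin.castSucc (Q j))
              + X (0 : Fin (k+1)) ^ ((2 * j - k) - (2 * j - (k+1)))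
                  * ∑ i : Fin k, X i.succ * rename Fin.castSucc (pderiv i (Q j))
              + X (0 : Fin (k+1)) ^ ((2 * (j-1) - k + 1) - (2 * j - (k+1)))
                  * rename Fin.castSucc (Q (j-1)))
          = ((2*j-k : ℕ) : ℂ) * (y2 * a j)
            + x ^ ((2*j-k) - (2*j-(k+1))) * s j
            + x ^ ((2*(j-1)-k+1) - (2*j-(k+1))) * a (j-1) := by
        intro j
        simp only [map_add, map_mul, map_pow, map_nsmul, aeval_X, map_sum, hvc, nsmul_eq_mul,
          map_natCast]
        have h0 : iteratedDeriv ((((0:Fin (k+1)) : ℕ)) + 1) h z = x := by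
          simp [iteratedDeriv_one, hx]
        have h1 : iteratedDeriv ((((⟨1, by omega⟩ : Fin (k+1)) : ℕ)) + 1) h z = y2 := by
          norm_num [hy2]
        rw [h0, h1, hs]
        refine congrArg₂ (· + ·) (congrArg₂ (· + ·) rfl (congrArg₂ (· * ·) rfl ?_)) rfl
        refine Finset.sum_congr rfl fun i _ => ?_
        simp [Fin.val_succ, mul_comm]
      have hQtop : Q (k+1) = 0 := by simp [hQdef]
      have ha0 : a 0 = 0 := by simp [ha, hQdef]
      have hatop : a (k+1) = 0 := by simp [ha, hQtop]
      have hstop : s (k+1) = 0 := by simp [hs, hQtop]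
      have hRHS : ∀ j : ℕ,
          x ^ (2*j-(k+1)) * G j *
            ((MvPolynomial.aeval (fun i : Fin (k+1) => iteratedDeriv ((i : ℕ) + 1) h z))
              ((2 * j - k) • (X (⟨1, by omega⟩ : Fin (k+1)) * rename Fin.castSucc (Q j))
                + X (0 : Fin (k+1)) ^ ((2 * j - k) - (2 * j - (k+1)))
                    * ∑ i : Fin k, X i.succ * rename Fin.castSucc (pderiv i (Q j))
                + X (0 : Fin (k+1)) ^ ((2 * (j-1) - k + 1) - (2 * j - (k+1)))
                    * rename Fin.castSucc (Q (j-1))))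
          = x ^ (2*j-(k+1)) * G j * (((2*j-k : ℕ) : ℂ) * (y2 * a j))
            + x ^ (2*j-(k+1)) * G j * (x ^ ((2*j-k) - (2*j-(k+1))) * s j)
            + x ^ (2*j-(k+1)) * G j * (x ^ ((2*(j-1)-k+1) - (2*j-(k+1))) * a (j-1)) := by
        intro j
        rw [haeval j, mul_add, mul_add]
      set f1 : ℕ → ℂ := fun j => x ^ (2*j-(k+1)) * G j * (((2*j-k : ℕ) : ℂ) * (y2 * a j))
        with hf1
      set f2 : ℕ → ℂ := fun j => x ^ (2*j-(k+1)) * G j *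
        (x ^ ((2*j-k) - (2*j-(k+1))) * s j) with hf2
      set f3 : ℕ → ℂ := fun j => x ^ (2*j-(k+1)) * G j *
        (x ^ ((2*(j-1)-k+1) - (2*j-(k+1))) * a (j-1)) with hf3
      have E1 : ∑ j ∈ Finset.Icc 1 (k+1), f1 j = ∑ i ∈ Finset.range k, f1 (i+1) := by
        rw [Finset.sum_Icc_succ_top (by omega : 1 ≤ k + 1), sum_Icc_one_eq]
        have : f1 (k+1) = 0 := by simp [hf1, hatop]
        rw [this, add_zero]
      have E2 : ∑ j ∈ Finset.Icc 1 (k+1), f2 j = ∑ i ∈ Finset.range k, f2 (i+1) := by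
        rw [Finset.sum_Icc_succ_top (by omega : 1 ≤ k + 1), sum_Icc_one_eq]
        have : f2 (k+1) = 0 := by simp [hf2, hstop]
        rw [this, add_zero]
      have E3 : ∑ j ∈ Finset.Icc 1 (k+1), f3 j = ∑ i ∈ Finset.range k, f3 (i+1+1) := by
        rw [sum_Icc_one_eq (k+1) f3, Finset.sum_range_succ']
        have : f3 (0+1) = 0 := by simp [hf3, ha0]
        rw [this, add_zero]
      have key : ∀ j : ℕ,
          (((2*j-k : ℕ):ℂ) * x ^ (2*j-k-1) * y2 * G j
              + x ^ (2*j-k) * (G (j+1) * x)) * a j + x ^ (2*j-k) * G j * s j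
          = f1 j + f2 j + f3 (j+1) := by
        intro j
        have hA : ((2*j-k:ℕ):ℂ) * x^(2*j-k-1) = ((2*j-k:ℕ):ℂ) * x^(2*j-(k+1)) := by
          rcases Nat.eq_zero_or_pos (2*j-k) with h0 | h0
          · simp [h0]
          · have he : 2*j-k-1 = 2*j-(k+1) := by omega
            rw [he]
        have hB : x^(2*j-k) = x^(2*j-(k+1)) * x^((2*j-k)-(2*j-(k+1))) := by
          rw [← pow_add]; congr 1; omega
        have hC : x^(2*j-k) * x
            = x^(2*(j+1)-(k+1)) * x^((2*(j+1-1)-k+1)-(2*(j+1)-(k+1))) := by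
          rw [← pow_succ, ← pow_add]; congr 1; omega
        rw [hf1, hf2, hf3]
        simp only [Nat.add_sub_cancel]
        calc (((2*j-k : ℕ):ℂ) * x ^ (2*j-k-1) * y2 * G j
                + x ^ (2*j-k) * (G (j+1) * x)) * a j + x ^ (2*j-k) * G j * s j
            = (((2*j-k : ℕ):ℂ) * x ^ (2*j-k-1)) * (y2 * G j * a j)
                + (x ^ (2*j-k) * x) * (G (j+1) * a j)
                + x ^ (2*j-k) * (G j * s j) := by ring
          _ = (((2*j-k : ℕ):ℂ) * x^(2*j-(k+1))) * (y2 * G j * a j)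
                + (x^(2*(j+1)-(k+1)) * x^((2*(j+1-1)-k+1)-(2*(j+1)-(k+1)))) * (G (j+1) * a j)
                + (x^(2*j-(k+1)) * x^((2*j-k)-(2*j-(k+1)))) * (G j * s j) := by
              rw [hA, hC, hB]
          _ = x ^ (2*j-(k+1)) * G j * (((2*j-k : ℕ) : ℂ) * (y2 * a j))
                + x ^ (2*j-(k+1)) * G j * (x ^ ((2*j-k) - (2*j-(k+1))) * s j)
                + x ^ (2*(j+1)-(k+1)) * G (j+1) *
                    (x ^ ((2*(j+1-1)-k+1) - (2*(j+1)-(k+1))) * a (j+1-1)) := by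
              simp only [Nat.add_sub_cancel]
              ring
      calc ∑ j ∈ Finset.Icc 1 k,
              ((((2*j-k : ℕ):ℂ) * x ^ (2*j-k-1) * y2 * G j
                + x ^ (2*j-k) * (G (j+1) * x)) * a j + x ^ (2*j-k) * G j * s j)
          = ∑ i ∈ Finset.range k,
              ((((2*(i+1)-k : ℕ):ℂ) * x ^ (2*(i+1)-k-1) * y2 * G (i+1)
                + x ^ (2*(i+1)-k) * (G (i+1+1) * x)) * a (i+1)
                + x ^ (2*(i+1)-k) * G (i+1) * s (i+1)) := sum_Icc_one_eq k _
        _ = ∑ i ∈ Finset.range k, (f1 (i+1) + f2 (i+1) + f3 (i+1+1)) :=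
            Finset.sum_congr rfl fun i _ => key (i+1)
        _ = (∑ i ∈ Finset.range k, (f1 (i+1) + f2 (i+1)))
              + ∑ i ∈ Finset.range k, f3 (i+1+1) := Finset.sum_add_distrib
        _ = ∑ i ∈ Finset.range k, f1 (i+1) + ∑ i ∈ Finset.range k, f2 (i+1)
              + ∑ i ∈ Finset.range k, f3 (i+1+1) := by rw [Finset.sum_add_distrib]
        _ = ∑ j ∈ Finset.Icc 1 (k+1), f1 j + ∑ j ∈ Finset.Icc 1 (k+1), f2 j
              + ∑ j ∈ Finset.Icc 1 (k+1), f3 j := by rw [E1, E2, E3]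
        _ = ∑ j ∈ Finset.Icc 1 (k+1), (f1 j + f2 j + f3 j) := by
            rw [Finset.sum_add_distrib, Finset.sum_add_distrib]
        _ = _ := Finset.sum_congr rfl fun j _ => (hRHS j).symm
end
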